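/- arXiv:2201.00165 — 3 statements merged into one kernel-verified Lean document; each statement's English description precedes it below -/
import Mathlib

section
/- For a simple graph G on n vertices, the permanent of its adjacency matrix equals the sum over k ≥ 0 of 2^k times the number of generalized 2-factors of G with exactly k cycles, where a generalized 2-factor is a spanning subgraph whose connected components are cycles and single edges. -/
open Finset
open scoped Classical

/-- The permanent of a square matrix with natural number entries. -/
noncomputable def permanent {n : ℕ} (A : Matrix (Fin n) (Fin n) ℕ) : ℕ :=
  ∑ σ : Equiv.Perm (Fin n), ∏ i, A i (σ i)

/-- A generalized 2-factor: a graph on `Fin n` each of whose connected components is a simple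
cycle or a single edge.  Equivalently (for finite simple graphs): every vertex has degree 1
or 2, and every neighbor of a degree-1 vertex also has degree 1. -/
noncomputable def IsGen2Factor {n : ℕ} (H : SimpleGraph (Fin n)) : Prop :=
  (∀ v, H.degree v = 1 ∨ H.degree v = 2) ∧
    ∀ v w, H.Adj v w → H.degree v = 1 → H.degree w = 1

/-- The number of cycle components of a generalized 2-factor: the number of connected
components minus the number of single-edge components (each single-edge component
contributes two vertices of degree 1). -/
noncomputable def numCycles {n : ℕ} (H : SimpleGraph (Fin n)) : ℕ :=
  Fintype.card H.ConnectedComponent -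
    (Finset.univ.filter (fun v => H.degree v = 1)).card / 2

/-- `F k G` : the number of generalized 2-factors of `G` with exactly `k` cycle components. -/
noncomputable def F {n : ℕ} (k : ℕ) (G : SimpleGraph (Fin n)) : ℕ :=
  ((Finset.univ : Finset (SimpleGraph (Fin n))).filter
    (fun H => H ≤ G ∧ IsGen2Factor H ∧ numCycles H = k)).card

theorem Equiv.Perm.apply_inv_self {α : Type*} (f : Equiv.Perm α) (x : α) : f (f⁻¹ x) = x :=
  f.apply_symm_apply x

namespace Gen2FactorProof

variable {n : ℕ}

/-- The graph associated to a permutation: `v ~ w` iff `σ v = w` or `σ w = v` (and `v ≠ w`). -/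
noncomputable def graphOf (σ : Equiv.Perm (Fin n)) : SimpleGraph (Fin n) :=
  SimpleGraph.fromRel (fun v w => σ v = w)

lemma graphOf_adj (σ : Equiv.Perm (Fin n)) (v w : Fin n) :
    (graphOf σ).Adj v w ↔ v ≠ w ∧ (σ v = w ∨ σ w = v) := by
  simp [graphOf, SimpleGraph.fromRel_adj]

lemma graphOf_inv (σ : Equiv.Perm (Fin n)) : graphOf σ⁻¹ = graphOf σ := by
  ext v w
  simp only [graphOf_adj]
  constructor
  · rintro ⟨h1, h2 | h2⟩
    · exact ⟨h1, Or.inr (by rw [← h2]; simp)⟩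
    · exact ⟨h1, Or.inl (by rw [← h2]; simp)⟩
  · rintro ⟨h1, h2 | h2⟩
    · exact ⟨h1, Or.inr (by rw [← h2]; simp)⟩
    · exact ⟨h1, Or.inl (by rw [← h2]; simp)⟩

section nbr
variable {σ : Equiv.Perm (Fin n)} {H : SimpleGraph (Fin n)}

/-- if every vertex has positive degree, σ is fixed-point-free -/
lemma fp_of (hdeg : ∀ v, H.degree v = 1 ∨ H.degree v = 2)
    (hH : graphOf σ = H) (v : Fin n) : σ v ≠ v := by
  intro h
  have hpos : 0 < H.degree v := by rcases hdeg v with h' | h' <;> omega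
  obtain ⟨w, hw⟩ := (H.degree_pos_iff_exists_adj v).mp hpos
  rw [← hH, graphOf_adj] at hw
  rcases hw with ⟨h1, h2 | h2⟩
  · exact h1 (by rw [← h2, h])
  · exact h1 (σ.injective (by rw [h2, h])).symm

lemma nbr_eq (hfp : ∀ v, σ v ≠ v) (hH : graphOf σ = H) (v : Fin n) :
    H.neighborFinset v = {σ v, σ⁻¹ v} := by
  ext u
  rw [SimpleGraph.mem_neighborFinset, ← hH, graphOf_adj]
  constructor
  · rintro ⟨h1, h2 | h2⟩
    · simp [← h2]
    · simp [← h2]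
  · intro hu
    rcases Finset.mem_insert.mp hu with rfl | hu
    · exact ⟨(hfp v).symm, Or.inl rfl⟩
    · rw [Finset.mem_singleton] at hu
      subst hu
      refine ⟨?_, Or.inr (by simp)⟩
      have := hfp (σ⁻¹ v)
      simp only [Equiv.Perm.apply_inv_self] at this
      exact fun h => this h

lemma deg1_iff (hfp : ∀ v, σ v ≠ v) (hH : graphOf σ = H) (v : Fin n) :
    H.degree v = 1 ↔ σ v = σ⁻¹ v := by
  rw [← SimpleGraph.card_neighborFinset_eq_degree, nbr_eq hfp hH]
  constructor
  · intro h
    by_contra hne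
    rw [Finset.card_insert_of_notMem (by simp [hne, -Equiv.Perm.coe_inv]), Finset.card_singleton] at h
    omega
  · intro h
    rw [h, Finset.insert_eq_self.mpr (Finset.mem_singleton_self _), Finset.card_singleton]

lemma deg_graphOf (hfp : ∀ v, σ v ≠ v) (hH : graphOf σ = H) (v : Fin n) :
    H.degree v = 1 ∨ H.degree v = 2 := by
  rw [← SimpleGraph.card_neighborFinset_eq_degree, nbr_eq hfp hH]
  by_cases h : σ v = σ⁻¹ v
  · rw [h, Finset.insert_eq_self.mpr (Finset.mem_singleton_self _), Finset.card_singleton]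
    left; rfl
  · rw [Finset.card_insert_of_notMem (by simp [h, -Equiv.Perm.coe_inv]), Finset.card_singleton]
    right; rfl

lemma gen2_graphOf (hfp : ∀ v, σ v ≠ v) : IsGen2Factor (graphOf σ) := by
  constructor
  · exact deg_graphOf hfp rfl
  · intro v w hadj h1
    rw [deg1_iff hfp rfl] at h1 ⊢
    rw [graphOf_adj] at hadj
    have hw : w = σ v := by
      rcases hadj.2 with h | h
      · exact h.symm
      · have hw' : w = σ⁻¹ v := by rw [← h]; simp
        rw [hw', ← h1]
    subst hw
    have h2 : σ (σ v) = v := by rw [h1]; simp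
    rw [h2]
    simp
end nbr

section comps
variable {H : SimpleGraph (Fin n)}
  (hdeg : ∀ v, H.degree v = 1 ∨ H.degree v = 2)
  (hone : ∀ v w, H.Adj v w → H.degree v = 1 → H.degree w = 1)

lemma reach_ind' {P : Fin n → Prop}
    (hstep : ∀ v w, H.Adj v w → P v → P w) {v w : Fin n}
    (h : H.Reachable v w) (hv : P v) : P w := by
  obtain ⟨p⟩ := h
  induction p with
  | nil => exact hv
  | cons h q ih => exact ih (hstep _ _ h hv)

include hdeg hone in
lemma deg_eq_of_adj {v w : Fin n} (h : H.Adj v w) : H.degree v = H.degree w := by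
  rcases hdeg v with h1 | h1
  · rw [h1, (hone v w h h1)]
  · rcases hdeg w with h2 | h2
    · exact absurd (hone w v h.symm h2) (by omega)
    · rw [h1, h2]

include hdeg hone in
lemma deg_eq_of_reachable {v w : Fin n} (h : H.Reachable v w) :
    H.degree v = H.degree w := by
  refine reach_ind' (P := fun x => H.degree v = H.degree x) ?_ h rfl
  intro a b hab hva
  rw [hva, deg_eq_of_adj hdeg hone hab]

include hone in
lemma nbr_singleton {v w : Fin n} (h1 : H.degree v = 1) (hadj : H.Adj v w) :
    H.neighborFinset v = {w} := by
  have hcard : (H.neighborFinset v).card = 1 := by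
    rwa [SimpleGraph.card_neighborFinset_eq_degree]
  obtain ⟨y, hy⟩ := Finset.card_eq_one.mp hcard
  have hw : w ∈ H.neighborFinset v := (SimpleGraph.mem_neighborFinset _ _ _).mpr hadj
  rw [hy, Finset.mem_singleton] at hw
  rw [hy, hw]

include hdeg hone in
lemma mem_pair_of_deg1 {v w : Fin n} (h1 : H.degree v = 1) (hadj : H.Adj v w) :
    ∀ u, H.Reachable v u → u = v ∨ u = w := by
  intro u hu
  refine reach_ind' (P := fun x => x = v ∨ x = w) ?_ hu (Or.inl rfl)
  rintro a b hab (h | h)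
  · right
    rw [h] at hab
    have hb : b ∈ H.neighborFinset v := (SimpleGraph.mem_neighborFinset _ _ _).mpr hab
    rw [nbr_singleton hone h1 hadj, Finset.mem_singleton] at hb
    exact hb
  · left
    rw [h] at hab
    have hb : b ∈ H.neighborFinset w := (SimpleGraph.mem_neighborFinset _ _ _).mpr hab
    rw [nbr_singleton hone (hone v w hadj h1) hadj.symm, Finset.mem_singleton] at hb
    exact hb

/-- a component is a cycle component if all its vertices have degree 2 -/
def cyc (H : SimpleGraph (Fin n)) (c : H.ConnectedComponent) : Prop :=
  ∀ v, H.connectedComponentMk v = c → H.degree v = 2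

include hdeg hone in
lemma deg1_card :
    (Finset.univ.filter (fun v => H.degree v = 1)).card =
      2 * (Finset.univ.filter (fun c : H.ConnectedComponent => ¬ cyc H c)).card := by
  rw [Finset.card_eq_sum_card_fiberwise
    (f := fun v => H.connectedComponentMk v)
    (t := Finset.univ.filter (fun c : H.ConnectedComponent => ¬ cyc H c))
    (fun v hv => by
      rw [Finset.mem_coe, Finset.mem_filter] at hv ⊢
      refine ⟨Finset.mem_univ _, fun hc => ?_⟩
      have := hc v rfl
      omega)]
  rw [Finset.sum_const_nat (m := 2) ?_, two_mul, add_comm]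
  · ring
  intro c hc
  rw [Finset.mem_filter] at hc
  have : ∃ v, H.connectedComponentMk v = c ∧ H.degree v ≠ 2 := by
    by_contra hcon
    push_neg at hcon
    exact hc.2 (fun v hv => hcon v hv)
  obtain ⟨v, hvc, hv2⟩ := this
  have hv1 : H.degree v = 1 := by rcases hdeg v with h | h; exact h; omega
  have hpos : 0 < H.degree v := by omega
  obtain ⟨w, hw⟩ := (H.degree_pos_iff_exists_adj v).mp hpos
  have hset : (Finset.univ.filter (fun u => H.degree u = 1)).filter
      (fun u => H.connectedComponentMk u = c) = {v, w} := by
    ext u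
    simp only [Finset.filter_filter, Finset.mem_filter, Finset.mem_univ, true_and,
      Finset.mem_insert, Finset.mem_singleton]
    constructor
    · rintro ⟨hu1, huc⟩
      have : H.Reachable v u := by
        rw [← SimpleGraph.ConnectedComponent.eq]
        rw [hvc, huc]
      exact mem_pair_of_deg1 hdeg hone hv1 hw u this
    · rintro (h | h) <;> rw [h]
      · exact ⟨hv1, hvc⟩
      · exact ⟨hone v w hw hv1, by rw [← hvc]; exact
          (SimpleGraph.ConnectedComponent.connectedComponentMk_eq_of_adj hw).symm⟩
  rw [hset]
  rw [Finset.card_insert_of_notMem (by simp [hw.ne]), Finset.card_singleton]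

include hdeg hone in
lemma numCycles_eq :
    numCycles H = (Finset.univ.filter (fun c : H.ConnectedComponent => cyc H c)).card := by
  rw [numCycles, deg1_card hdeg hone]
  rw [Nat.mul_div_cancel_left _ (by norm_num)]
  have hsplit := Finset.card_filter_add_card_filter_not
    (s := (Finset.univ : Finset H.ConnectedComponent)) (p := fun c => cyc H c)
  rw [← Finset.card_univ]
  omega
end comps

section rigid
variable {H : SimpleGraph (Fin n)} {σ τ : Equiv.Perm (Fin n)}
  (hdeg : ∀ v, H.degree v = 1 ∨ H.degree v = 2)
  (hσ : graphOf σ = H) (hτ : graphOf τ = H)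

include hdeg hσ hτ in
lemma inv_agree {x : Fin n} (h : σ x = τ x) : σ⁻¹ x = τ⁻¹ x := by
  have hfσ := fp_of hdeg hσ
  have hfτ := fp_of hdeg hτ
  have hN := (nbr_eq hfσ hσ x).symm.trans (nbr_eq hfτ hτ x)
  rcases hdeg x with h1 | h1
  · have e1 := (deg1_iff hfσ hσ x).mp h1
    have e2 := (deg1_iff hfτ hτ x).mp h1
    rw [← e1, ← e2, h]
  · have e1 : σ x ≠ σ⁻¹ x := fun hc => by
      have := (deg1_iff hfσ hσ x).mpr hc; omega
    have e2 : τ x ≠ τ⁻¹ x := fun hc => by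
      have := (deg1_iff hfτ hτ x).mpr hc; omega
    have hmem : σ⁻¹ x ∈ ({τ x, τ⁻¹ x} : Finset (Fin n)) := by
      rw [← hN]; simp
    rcases Finset.mem_insert.mp hmem with hc | hc
    · exact absurd (hc.trans h.symm).symm e1
    · rwa [Finset.mem_singleton] at hc

include hdeg hσ hτ in
lemma agree_inv {x : Fin n} (h : σ⁻¹ x = τ⁻¹ x) : σ x = τ x := by
  have := inv_agree (σ := σ⁻¹) (τ := τ⁻¹) hdeg
    ((graphOf_inv σ).trans hσ) ((graphOf_inv τ).trans hτ) h
  simpa using this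

include hdeg hσ hτ in
lemma rigidity {v w : Fin n} (hr : H.Reachable v w) (h : σ v = τ v) : σ w = τ w := by
  refine reach_ind' (P := fun x => σ x = τ x) ?_ hr h
  intro a b hab ha
  have hfσ := fp_of hdeg hσ
  have hb : b ∈ ({σ a, σ⁻¹ a} : Finset (Fin n)) := by
    rw [← nbr_eq hfσ hσ a, SimpleGraph.mem_neighborFinset]; exact hab
  rcases Finset.mem_insert.mp hb with hc | hc
  · -- b = σ a
    subst hc
    apply agree_inv hdeg hσ hτ
    have h1 : σ⁻¹ (σ a) = a := by simp
    have h2 : τ⁻¹ (σ a) = a := by rw [ha] at *; simp [← ha]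
    rw [h1, h2]
  · rw [Finset.mem_singleton] at hc
    subst hc
    have h1 : σ (σ⁻¹ a) = a := by simp
    have h2 : τ (σ⁻¹ a) = a := by
      rw [inv_agree hdeg hσ hτ ha]; simp
    rw [h1, h2]
end rigid

section flip
variable {H : SimpleGraph (Fin n)}

/-- flip σ on the components where ε is false -/
noncomputable def flip (σ : Equiv.Perm (Fin n)) {H : SimpleGraph (Fin n)}
    (hc : ∀ v, H.connectedComponentMk (σ v) = H.connectedComponentMk v)
    (ε : H.ConnectedComponent → Bool) : Equiv.Perm (Fin n) where
  toFun v := if ε (H.connectedComponentMk v) then σ v else σ⁻¹ v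
  invFun v := if ε (H.connectedComponentMk v) then σ⁻¹ v else σ v
  left_inv v := by
    have hc' : H.connectedComponentMk (σ⁻¹ v) = H.connectedComponentMk v := by
      conv_rhs => rw [← Equiv.Perm.apply_inv_self σ v]
      exact (hc (σ⁻¹ v)).symm
    rw [Equiv.Perm.coe_inv] at hc'
    by_cases h : ε (H.connectedComponentMk v) <;> simp [h, hc, hc']
  right_inv v := by
    have hc' : H.connectedComponentMk (σ⁻¹ v) = H.connectedComponentMk v := by
      conv_rhs => rw [← Equiv.Perm.apply_inv_self σ v]
      exact (hc (σ⁻¹ v)).symm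
    rw [Equiv.Perm.coe_inv] at hc'
    by_cases h : ε (H.connectedComponentMk v) <;> simp [h, hc, hc']

lemma flip_apply (σ : Equiv.Perm (Fin n)) {H : SimpleGraph (Fin n)}
    (hc : ∀ v, H.connectedComponentMk (σ v) = H.connectedComponentMk v)
    (ε : H.ConnectedComponent → Bool) (v : Fin n) :
    flip σ hc ε v = if ε (H.connectedComponentMk v) then σ v else σ⁻¹ v := rfl

variable {σ : Equiv.Perm (Fin n)}
  (hdeg : ∀ v, H.degree v = 1 ∨ H.degree v = 2)
  (hσ : graphOf σ = H)

include hdeg in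
lemma comp_pres (hσ : graphOf σ = H) :
    ∀ v, H.connectedComponentMk (σ v) = H.connectedComponentMk v := by
  intro v
  have : H.Adj v (σ v) := by
    rw [← hσ, graphOf_adj]
    exact ⟨(fp_of hdeg hσ v).symm, Or.inl rfl⟩
  exact (SimpleGraph.ConnectedComponent.connectedComponentMk_eq_of_adj this).symm

include hdeg hσ in
lemma graphOf_flip (ε : H.ConnectedComponent → Bool) :
    graphOf (flip σ (comp_pres hdeg hσ) ε) = H := by
  have hfp := fp_of hdeg hσ
  have hadjσ : ∀ v, H.Adj v (σ v) := fun v => by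
    rw [← hσ, graphOf_adj]; exact ⟨(hfp v).symm, Or.inl rfl⟩
  have hadjσ' : ∀ v, H.Adj v (σ⁻¹ v) := fun v => by
    rw [← hσ, graphOf_adj]
    refine ⟨fun h => hfp (σ⁻¹ v) (by rw [Equiv.Perm.apply_inv_self]; exact h), Or.inr (by simp)⟩
  have hadjf : ∀ v, H.Adj v (flip σ (comp_pres hdeg hσ) ε v) := fun v => by
    rw [flip_apply]
    by_cases h : ε (H.connectedComponentMk v) <;> simp [h, hadjσ, hadjσ', -Equiv.Perm.coe_inv]
  ext v w
  rw [graphOf_adj]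
  constructor
  · rintro ⟨h1, h2 | h2⟩
    · rw [← h2]; exact hadjf v
    · rw [← h2] at h1 ⊢; exact (hadjf w).symm
  · intro hadj
    refine ⟨hadj.ne, ?_⟩
    have hw : w ∈ ({σ v, σ⁻¹ v} : Finset (Fin n)) := by
      rw [← nbr_eq hfp hσ, SimpleGraph.mem_neighborFinset]; exact hadj
    have hcomp : H.connectedComponentMk w = H.connectedComponentMk v :=
      (SimpleGraph.ConnectedComponent.connectedComponentMk_eq_of_adj hadj).symm
    by_cases h : ε (H.connectedComponentMk v)
    · rcases Finset.mem_insert.mp hw with hc | hc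
      · left; rw [flip_apply, if_pos h, hc]
      · rw [Finset.mem_singleton] at hc
        right; rw [flip_apply, hcomp, if_pos h, hc]; simp
    · rcases Finset.mem_insert.mp hw with hc | hc
      · right; rw [flip_apply, hcomp, if_neg h, hc]; simp
      · rw [Finset.mem_singleton] at hc
        left; rw [flip_apply, if_neg h, hc]
end flip

section ex
variable {H : SimpleGraph (Fin n)}
  (hdeg : ∀ v, H.degree v = 1 ∨ H.degree v = 2)
  (hone : ∀ v w, H.Adj v w → H.degree v = 1 → H.degree w = 1)

include hdeg hone in
lemma exists_comp (c : H.ConnectedComponent) :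
    ∃ σ : Equiv.Perm (Fin n),
      (∀ v, H.connectedComponentMk v = c → H.Adj v (σ v)) ∧
      (∀ v, H.connectedComponentMk v ≠ c → σ v = v) ∧
      (∀ v w, H.connectedComponentMk v = c → H.Adj v w → σ v = w ∨ σ w = v) := by
  obtain ⟨v₀, hv₀⟩ := Quot.exists_rep c
  have hv₀ : H.connectedComponentMk v₀ = c := hv₀
  have hreach_c : ∀ v, H.connectedComponentMk v = c → H.Reachable v₀ v := by
    intro v hv
    rw [← SimpleGraph.ConnectedComponent.eq, hv₀, hv]
  rcases hdeg v₀ with h1 | h2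
  · -- single-edge component
    obtain ⟨w, hw⟩ := (H.degree_pos_iff_exists_adj v₀).mp (by omega)
    have hwc : H.connectedComponentMk w = c := by
      rw [← hv₀]
      exact (SimpleGraph.ConnectedComponent.connectedComponentMk_eq_of_adj hw).symm
    refine ⟨Equiv.swap v₀ w, ?_, ?_, ?_⟩
    · intro v hv
      rcases mem_pair_of_deg1 hdeg hone h1 hw v (hreach_c v hv) with h | h <;> rw [h]
      · rw [Equiv.swap_apply_left]; exact hw
      · rw [Equiv.swap_apply_right]; exact hw.symm
    · intro v hv
      exact Equiv.swap_apply_of_ne_of_ne (fun h => hv (h ▸ hv₀)) (fun h => hv (h ▸ hwc))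
    · intro v x hv hadj
      rcases mem_pair_of_deg1 hdeg hone h1 hw v (hreach_c v hv) with h | h
      · subst h
        left
        have hx : x ∈ H.neighborFinset v := (SimpleGraph.mem_neighborFinset _ _ _).mpr hadj
        rw [nbr_singleton hone h1 hw, Finset.mem_singleton] at hx
        rw [hx, Equiv.swap_apply_left]
      · subst h
        left
        have hx : x ∈ H.neighborFinset v := (SimpleGraph.mem_neighborFinset _ _ _).mpr hadj
        rw [nbr_singleton hone (hone v₀ v hw h1) hw.symm, Finset.mem_singleton] at hx
        rw [hx, Equiv.swap_apply_right]
  · -- cycle component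
    -- find a maximal path starting at v₀
    have hs0 : (0 : ℕ) ∈ (Finset.range (n+1)).filter
        (fun k => ∃ u, ∃ p : H.Walk v₀ u, p.IsPath ∧ p.length = k) := by
      rw [Finset.mem_filter, Finset.mem_range]
      exact ⟨by omega, v₀, SimpleGraph.Walk.nil, SimpleGraph.Walk.IsPath.nil, rfl⟩
    obtain ⟨u, p, hp, hlen⟩ := (Finset.mem_filter.mp (Finset.max'_mem _ ⟨0, hs0⟩)).2
    have hmax : ∀ (u' : Fin n) (q : H.Walk v₀ u'), q.IsPath → q.length ≤ p.length := by
      intro u' q hq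
      rw [hlen]
      apply Finset.le_max'
      rw [Finset.mem_filter, Finset.mem_range]
      have := hq.length_lt
      rw [Fintype.card_fin] at this
      exact ⟨by omega, u', q, hq, rfl⟩
    have hnd : p.support.Nodup := hp.support_nodup
    have hLp : p.support.length = p.length + 1 := SimpleGraph.Walk.length_support p
    have hLpos : 0 < p.support.length := by omega
    have hreach_l : ∀ v (_ : v ∈ p.support), H.Reachable v₀ v := fun v hv =>
      ⟨p.takeUntil v hv⟩
    have hmkl : ∀ v (_ : v ∈ p.support), H.connectedComponentMk v = c := by
      intro v hv
      rw [← hv₀]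
      exact (SimpleGraph.ConnectedComponent.eq.mpr (hreach_l v hv)).symm
    have hdegl : ∀ v (_ : v ∈ p.support), H.degree v = 2 := by
      intro v hv
      rw [← deg_eq_of_reachable hdeg hone (hreach_l v hv)]
      exact h2
    -- no extension
    have noext : ∀ x, H.Adj u x → x ∈ p.support := by
      intro x hx
      by_contra hxl
      have hq : (p.concat hx).IsPath := by
        rw [SimpleGraph.Walk.isPath_def, SimpleGraph.Walk.support_concat,
          List.nodup_append]
        exact ⟨hnd, List.nodup_singleton x, by intro a ha b hb h; simp at hb; subst hb; exact hxl (h ▸ ha)⟩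
      have := hmax _ _ hq
      rw [SimpleGraph.Walk.length_concat] at this
      omega
    have hul : u ∈ p.support := p.end_mem_support
    have hdegu : H.degree u = 2 := hdegl u hul
    -- the support has length ≥ 3
    have hL3 : 3 ≤ p.support.length := by
      have hsub : insert u (H.neighborFinset u) ⊆ p.support.toFinset := by
        intro x hx
        rcases Finset.mem_insert.mp hx with rfl | hx
        · exact List.mem_toFinset.mpr hul
        · exact List.mem_toFinset.mpr (noext x ((SimpleGraph.mem_neighborFinset _ _ _).mp hx))
      have hcard : (insert u (H.neighborFinset u)).card = 3 := by
        rw [Finset.card_insert_of_notMem (by simp), SimpleGraph.card_neighborFinset_eq_degree,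
          hdegu]
      have := Finset.card_le_card hsub
      rwa [hcard, List.toFinset_card_of_nodup hnd] at this
    -- index adjacency
    have hadj_idx : ∀ i (h : i + 1 < p.support.length),
        H.Adj (p.support[i]'(by omega)) (p.support[i+1]'h) := by
      have hchain := SimpleGraph.Walk.isChain_adj_support p
      intro i h
      have := List.isChain_iff_getElem.mp hchain i h
      simpa [List.get_eq_getElem] using this
    have hu_idx : p.support[p.support.length - 1]'(by omega) = u := by
      rw [← List.getLast_eq_getElem]
      exact SimpleGraph.Walk.getLast_support p
    have hv0_idx : p.support[0]'hLpos = v₀ := by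
      rw [List.getElem_zero]
      exact SimpleGraph.Walk.head_support p
    have gcongr : ∀ (i j : ℕ) (hi : i < p.support.length) (hj : j < p.support.length),
        i = j → p.support[i]'hi = p.support[j]'hj := by
      intro i j hi hj h
      subst h
      rfl
    -- closing edge
    have hclose : H.Adj u v₀ := by
      have hy2 : p.support.length - 2 < p.support.length := by omega
      have e2 : p.support.length - 2 + 1 = p.support.length - 1 := by omega
      set y : Fin n := p.support[p.support.length-2]'hy2 with hydef
      have hyadj : H.Adj y u := by
        have h3 := hadj_idx (p.support.length-2) (by omega)
        have h4 : p.support[p.support.length-2+1]'(by omega) = u :=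
          (gcongr _ _ (by omega) (by omega) e2).trans hu_idx
        rw [h4] at h3
        exact h3
      have hyN : y ∈ H.neighborFinset u := by
        rw [SimpleGraph.mem_neighborFinset]
        exact hyadj.symm
      have hpos : 0 < ((H.neighborFinset u).erase y).card := by
        rw [Finset.card_erase_of_mem hyN, SimpleGraph.card_neighborFinset_eq_degree, hdegu]
        omega
      obtain ⟨x, hxe⟩ := Finset.card_pos.mp hpos
      obtain ⟨hxy, hxN⟩ := Finset.mem_erase.mp hxe
      have hadjux : H.Adj u x := (SimpleGraph.mem_neighborFinset _ _ _).mp hxN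
      have hxl : x ∈ p.support := noext x hadjux
      obtain ⟨i, hi, hxi⟩ := List.getElem_of_mem hxl
      have hine1 : i ≠ p.support.length - 1 := by
        intro h
        apply hadjux.ne
        rw [← hxi]
        exact hu_idx.symm.trans (gcongr _ _ (by omega) hi h.symm)
      have hine2 : i ≠ p.support.length - 2 := by
        intro h
        apply hxy
        rw [← hxi, hydef]
        exact (gcongr _ _ hi hy2 h)
      have hizero : i = 0 := by
        by_contra hiz
        have hip : 1 ≤ i := by omega
        have hi1 : i - 1 < p.support.length := by omega
        have hi2 : i + 1 < p.support.length := by omega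
        set a : Fin n := p.support[i-1]'hi1 with hadef
        set b : Fin n := p.support[i+1]'hi2 with hbdef
        have hprev : H.Adj a x := by
          have h3 := hadj_idx (i-1) (by omega)
          have h4 : p.support[i-1+1]'(by omega) = x :=
            (gcongr _ _ (by omega) hi (by omega)).trans hxi
          rw [h4] at h3
          rw [hadef]
          exact h3
        have hnext : H.Adj x b := by
          have h3 := hadj_idx i hi2
          rw [← hxi]
          exact h3
        have hpairne : a ≠ b := by
          rw [hadef, hbdef]
          intro h
          have := (hnd.getElem_inj_iff (hi := hi1) (hj := hi2)).mp h
          omega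
        have hdx : H.degree x = 2 := by
          rw [← deg_eq_of_adj hdeg hone hadjux]
          exact hdegu
        have hsub : ({a, b} : Finset (Fin n)) ⊆ H.neighborFinset x := by
          intro z hz
          rw [SimpleGraph.mem_neighborFinset]
          rcases Finset.mem_insert.mp hz with h | h
          · rw [h]; exact hprev.symm
          · rw [Finset.mem_singleton] at h
            rw [h]; exact hnext
        have hNx : H.neighborFinset x = ({a, b} : Finset (Fin n)) := by
          refine (Finset.eq_of_subset_of_card_le hsub ?_).symm
          rw [SimpleGraph.card_neighborFinset_eq_degree, hdx,
            Finset.card_insert_of_notMem (by simp [hpairne]), Finset.card_singleton]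
        have huNx : u ∈ H.neighborFinset x := by
          rw [SimpleGraph.mem_neighborFinset]
          exact hadjux.symm
        rw [hNx] at huNx
        rcases Finset.mem_insert.mp huNx with hc2 | hc2
        · have : p.support.length - 1 = i - 1 := by
            apply (hnd.getElem_inj_iff (hi := by omega) (hj := hi1)).mp
            rw [hu_idx, ← hadef]
            exact hc2
          omega
        · rw [Finset.mem_singleton] at hc2
          have : p.support.length - 1 = i + 1 := by
            apply (hnd.getElem_inj_iff (hi := by omega) (hj := hi2)).mp
            rw [hu_idx, ← hbdef]
            exact hc2
          omega
      have hfin : x = v₀ := hxi.symm.trans ((gcongr _ _ hi hLpos hizero).trans hv0_idx)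
      rw [← hfin]
      exact hadjux
    -- the cyclic permutation
    have hadjform : ∀ v (hv : v ∈ p.support), H.Adj v (p.support.formPerm v) := by
      intro v hv
      obtain ⟨i, hi, hvi⟩ := List.getElem_of_mem hv
      rw [← hvi, List.formPerm_apply_getElem _ hnd i hi]
      by_cases hc : i + 1 < p.support.length
      · have h4 : p.support[(i+1) % p.support.length]'(Nat.mod_lt _ (by omega)) =
            p.support[i+1]'hc := gcongr _ _ _ _ (Nat.mod_eq_of_lt hc)
        rw [h4]
        exact hadj_idx i hc
      · have hieq : i = p.support.length - 1 := by omega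
        have e : (i+1) % p.support.length = 0 := by
          have e1 : i + 1 = p.support.length := by omega
          rw [e1, Nat.mod_self]
        have h4 : p.support[(i+1) % p.support.length]'(Nat.mod_lt _ (by omega)) = v₀ :=
          (gcongr _ _ _ hLpos e).trans hv0_idx
        rw [h4]
        have h5 : p.support[i]'hi = u := (gcongr _ _ hi (by omega) hieq).trans hu_idx
        rw [h5]
        exact hclose
    have hform2 : ∀ v (_ : v ∈ p.support),
        p.support.formPerm (p.support.formPerm v) ≠ v := by
      intro v hv
      obtain ⟨i, hi, hvi⟩ := List.getElem_of_mem hv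
      have hpow := List.formPerm_pow_apply_getElem p.support hnd 2 i hi
      have h2a : (p.support.formPerm ^ 2) (p.support[i]'hi) =
          p.support.formPerm (p.support.formPerm (p.support[i]'hi)) := by
        rw [pow_two]; rfl
      rw [← hvi, ← h2a, hpow]
      intro hcon
      have hinj := (hnd.getElem_inj_iff (hi := Nat.mod_lt _ (by omega)) (hj := hi)).mp hcon
      rcases Nat.lt_or_ge (i+2) p.support.length with hc | hc
      · rw [Nat.mod_eq_of_lt hc] at hinj; omega
      · have hsm : (i+2) % p.support.length = i + 2 - p.support.length := by
          rw [Nat.mod_eq_sub_mod hc, Nat.mod_eq_of_lt (by omega)]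
        rw [hsm] at hinj; omega
    have hinvne : ∀ v (_ : v ∈ p.support),
        p.support.formPerm v ≠ p.support.formPerm⁻¹ v := by
      intro v hv h
      exact hform2 v hv (by rw [h]; simp)
    have hNl : ∀ v (_ : v ∈ p.support),
        H.neighborFinset v = {p.support.formPerm v, p.support.formPerm⁻¹ v} := by
      intro v hv
      have h1 : p.support.formPerm v ∈ H.neighborFinset v := by
        rw [SimpleGraph.mem_neighborFinset]; exact hadjform v hv
      have hwmem : p.support.formPerm⁻¹ v ∈ p.support := by
        apply List.mem_of_formPerm_apply_mem
        simpa using hv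
      have h2 : p.support.formPerm⁻¹ v ∈ H.neighborFinset v := by
        rw [SimpleGraph.mem_neighborFinset]
        have h3 := hadjform _ hwmem
        rw [Equiv.Perm.apply_inv_self] at h3
        exact h3.symm
      refine (Finset.eq_of_subset_of_card_le ?_ ?_).symm
      · intro z hz
        rcases Finset.mem_insert.mp hz with h | h
        · rw [h]; exact h1
        · rw [Finset.mem_singleton] at h; rw [h]; exact h2
      · rw [SimpleGraph.card_neighborFinset_eq_degree, hdegl v hv,
          Finset.card_insert_of_notMem (by simp [hinvne v hv, -Equiv.Perm.coe_inv]), Finset.card_singleton]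
    have hclosure : ∀ v, H.connectedComponentMk v = c → v ∈ p.support := by
      intro v hv
      refine reach_ind' (P := fun x => x ∈ p.support) ?_ (hreach_c v hv) p.start_mem_support
      intro a b hab ha
      have hb : b ∈ H.neighborFinset a := (SimpleGraph.mem_neighborFinset _ _ _).mpr hab
      rw [hNl a ha] at hb
      rcases Finset.mem_insert.mp hb with h | h
      · rw [h]; exact List.formPerm_apply_mem_of_mem ha
      · rw [Finset.mem_singleton] at h
        rw [h]
        apply List.mem_of_formPerm_apply_mem
        simpa using ha
    refine ⟨p.support.formPerm, ?_, ?_, ?_⟩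
    · intro v hv
      exact hadjform v (hclosure v hv)
    · intro v hv
      apply List.formPerm_apply_of_notMem
      intro hvl
      exact hv (hmkl v hvl)
    · intro v w hv hadj
      have hvl := hclosure v hv
      have hw : w ∈ H.neighborFinset v := (SimpleGraph.mem_neighborFinset _ _ _).mpr hadj
      rw [hNl v hvl] at hw
      rcases Finset.mem_insert.mp hw with h | h
      · left; exact h.symm
      · rw [Finset.mem_singleton] at h
        right; rw [h]; simp
end ex

section base
variable {H : SimpleGraph (Fin n)}
  (hdeg : ∀ v, H.degree v = 1 ∨ H.degree v = 2)
  (hone : ∀ v w, H.Adj v w → H.degree v = 1 → H.degree w = 1)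

include hdeg hone in
lemma exists_base : ∃ σ : Equiv.Perm (Fin n), graphOf σ = H := by
  choose f h1 h2 h3 using exists_comp hdeg hone
  have hmk : ∀ v, H.connectedComponentMk (f (H.connectedComponentMk v) v) =
      H.connectedComponentMk v := by
    intro v
    exact (SimpleGraph.ConnectedComponent.connectedComponentMk_eq_of_adj
      (h1 (H.connectedComponentMk v) v rfl)).symm
  refine ⟨⟨fun v => f (H.connectedComponentMk v) v,
      fun v => (f (H.connectedComponentMk v))⁻¹ v, ?_, ?_⟩, ?_⟩
  · intro v
    simp only
    rw [hmk v]
    simp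
  · intro v
    simp only
    by_cases hv : (f (H.connectedComponentMk v))⁻¹ v = v
    · rw [hv]
      have h5 := congrArg (f (H.connectedComponentMk v)) hv
      rw [Equiv.Perm.apply_inv_self] at h5
      exact h5.symm
    · have hfix : H.connectedComponentMk ((f (H.connectedComponentMk v))⁻¹ v) =
          H.connectedComponentMk v := by
        by_contra hne
        have h6 := h2 _ _ hne
        rw [Equiv.Perm.apply_inv_self] at h6
        exact hv h6.symm
      rw [hfix]
      simp
  · ext v w
    rw [graphOf_adj]
    show v ≠ w ∧ (f (H.connectedComponentMk v) v = w ∨ f (H.connectedComponentMk w) w = v)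
      ↔ H.Adj v w
    constructor
    · rintro ⟨h, hc | hc⟩
      · rw [← hc]; exact h1 _ v rfl
      · rw [← hc] at h ⊢
        exact (h1 _ w rfl).symm
    · intro hadj
      refine ⟨hadj.ne, ?_⟩
      rcases h3 (H.connectedComponentMk v) v w rfl hadj with hc | hc
      · exact Or.inl hc
      · right
        rw [(SimpleGraph.ConnectedComponent.connectedComponentMk_eq_of_adj hadj).symm]
        exact hc
end base

section fiber
variable {H : SimpleGraph (Fin n)}
  (hdeg : ∀ v, H.degree v = 1 ∨ H.degree v = 2)
  (hone : ∀ v w, H.Adj v w → H.degree v = 1 → H.degree w = 1)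

include hdeg hone in
lemma fiber_card :
    (Finset.univ.filter (fun σ : Equiv.Perm (Fin n) => graphOf σ = H)).card =
      2 ^ numCycles H := by
  obtain ⟨σ₀, hσ₀⟩ := exists_base hdeg hone
  have mk_out : ∀ c : H.ConnectedComponent, H.connectedComponentMk c.out = c := fun c =>
    c.out_eq
  have hfp₀ := fp_of hdeg hσ₀
  have hadj₀ : ∀ v, H.Adj v (σ₀ v) := fun v => by
    rw [← hσ₀, graphOf_adj]; exact ⟨(hfp₀ v).symm, Or.inl rfl⟩
  rw [numCycles_eq hdeg hone]
  have hcard2 : 2 ^ (Finset.univ.filter (fun c : H.ConnectedComponent => cyc H c)).card =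
      (Finset.univ : Finset ({c : H.ConnectedComponent // cyc H c} → Bool)).card := by
    rw [Finset.card_univ, Fintype.card_fun, Fintype.card_bool, Fintype.card_subtype]
  rw [hcard2]
  refine Finset.card_bij'
    (i := fun σ _ => fun c : {c : H.ConnectedComponent // cyc H c} =>
      decide (σ c.1.out = σ₀ c.1.out))
    (j := fun ε _ => flip σ₀ (comp_pres hdeg hσ₀)
      (fun c => if h : cyc H c then ε ⟨c, h⟩ else true))
    ?_ ?_ ?_ ?_
  · intro σ hσmem
    exact Finset.mem_univ _
  · intro ε _
    rw [Finset.mem_filter]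
    exact ⟨Finset.mem_univ _, graphOf_flip hdeg hσ₀ _⟩
  · -- j (i σ) = σ
    intro σ hσmem
    rw [Finset.mem_filter] at hσmem
    have hσ : graphOf σ = H := hσmem.2
    have hfp := fp_of hdeg hσ
    apply Equiv.ext
    intro v
    rw [flip_apply]
    by_cases h : cyc H (H.connectedComponentMk v)
    · rw [dif_pos h]
      beta_reduce
      have ho : H.connectedComponentMk (H.connectedComponentMk v).out =
        H.connectedComponentMk v := mk_out _
      have hreach : H.Reachable (H.connectedComponentMk v).out v :=
        SimpleGraph.ConnectedComponent.eq.mp (by rw [ho])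
      have hdego : H.degree (H.connectedComponentMk v).out = 2 := h _ ho
      have hne₀ : σ₀ (H.connectedComponentMk v).out ≠ σ₀⁻¹ (H.connectedComponentMk v).out := by
        intro hc
        have := (deg1_iff hfp₀ hσ₀ _).mpr hc
        omega
      have hmem : σ (H.connectedComponentMk v).out ∈
          ({σ₀ (H.connectedComponentMk v).out, σ₀⁻¹ (H.connectedComponentMk v).out} :
            Finset (Fin n)) := by
        rw [← nbr_eq hfp₀ hσ₀, SimpleGraph.mem_neighborFinset]
        rw [← hσ, graphOf_adj]
        exact ⟨(hfp _).symm, Or.inl rfl⟩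
      rcases Finset.mem_insert.mp hmem with hc | hc
      · rw [decide_eq_true hc, if_pos rfl]
        exact (rigidity hdeg hσ hσ₀ hreach hc).symm
      · rw [Finset.mem_singleton] at hc
        have hnc : ¬ (σ (H.connectedComponentMk v).out = σ₀ (H.connectedComponentMk v).out) := by
          rw [hc]; exact fun hcc => hne₀ hcc.symm
        rw [decide_eq_false hnc, if_neg (by simp)]
        exact (rigidity hdeg hσ ((graphOf_inv σ₀).trans hσ₀) hreach hc).symm
    · rw [dif_neg h]
      rw [if_pos rfl]
      have : ∃ x, H.connectedComponentMk x = H.connectedComponentMk v ∧ H.degree x ≠ 2 := by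
        by_contra hcon
        push_neg at hcon
        exact h (fun x hx => hcon x hx)
      obtain ⟨x, hx, hx2⟩ := this
      have hx1 : H.degree x = 1 := by rcases hdeg x with h' | h' <;> omega
      have hdv : H.degree v = 1 := by
        rw [← deg_eq_of_reachable hdeg hone
          (SimpleGraph.ConnectedComponent.eq.mp hx)]
        exact hx1
      have e1 := (deg1_iff hfp hσ v).mp hdv
      have hN := nbr_eq hfp hσ v
      rw [← e1] at hN
      have hmem : σ₀ v ∈ H.neighborFinset v := by
        rw [SimpleGraph.mem_neighborFinset]; exact hadj₀ v
      rw [hN] at hmem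
      simp only [Finset.mem_insert, Finset.mem_singleton, or_self] at hmem
      exact hmem
  · -- i (j ε) = ε
    intro ε _
    funext c
    obtain ⟨c, hcyc⟩ := c
    beta_reduce
    have ho : H.connectedComponentMk c.out = c := mk_out _
    have hdego : H.degree c.out = 2 := hcyc _ ho
    have hne₀ : σ₀ c.out ≠ σ₀⁻¹ c.out := by
      intro hc
      have := (deg1_iff hfp₀ hσ₀ _).mpr hc
      omega
    rw [flip_apply, ho, dif_pos hcyc]
    cases hb : ε ⟨c, hcyc⟩
    · rw [if_neg (by simp)]
      exact decide_eq_false (fun hc => hne₀ hc.symm)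
    · rw [if_pos rfl]
      exact decide_eq_true rfl
end fiber

theorem main {n : ℕ} (G : SimpleGraph (Fin n)) :
    permanent (G.adjMatrix ℕ) = ∑ k ∈ Finset.range (n + 1), 2 ^ k * F k G := by
  have hprod : ∀ σ : Equiv.Perm (Fin n),
      (∏ i, (G.adjMatrix ℕ) i (σ i)) = if (∀ i, G.Adj i (σ i)) then 1 else 0 := by
    intro σ
    by_cases h : ∀ i, G.Adj i (σ i)
    · rw [if_pos h]
      apply Finset.prod_eq_one
      intro i _
      rw [SimpleGraph.adjMatrix_apply, if_pos (h i)]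
    · rw [if_neg h]
      push_neg at h
      obtain ⟨i, hi⟩ := h
      apply Finset.prod_eq_zero (Finset.mem_univ i)
      rw [SimpleGraph.adjMatrix_apply, if_neg hi]
  rw [permanent]
  simp_rw [hprod]
  rw [Finset.sum_boole]
  have hmaps : ∀ σ ∈ Finset.univ.filter (fun σ : Equiv.Perm (Fin n) => ∀ i, G.Adj i (σ i)),
      graphOf σ ∈ Finset.univ.filter
        (fun H : SimpleGraph (Fin n) => H ≤ G ∧ IsGen2Factor H) := by
    intro σ hσ
    rw [Finset.mem_filter] at hσ ⊢
    have hgood := hσ.2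
    have hfp : ∀ v, σ v ≠ v := fun v => (hgood v).ne'
    refine ⟨Finset.mem_univ _, ?_, gen2_graphOf hfp⟩
    intro v w hadj
    rw [graphOf_adj] at hadj
    rcases hadj.2 with h | h
    · rw [← h]; exact hgood v
    · rw [← h] at hadj ⊢
      exact (hgood w).symm
  rw [Finset.card_eq_sum_card_fiberwise hmaps]
  push_cast
  have hfib : ∀ H ∈ Finset.univ.filter
      (fun H : SimpleGraph (Fin n) => H ≤ G ∧ IsGen2Factor H),
      ((Finset.univ.filter (fun σ : Equiv.Perm (Fin n) => ∀ i, G.Adj i (σ i))).filter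
        (fun σ => graphOf σ = H)).card = 2 ^ numCycles H := by
    intro H hH
    rw [Finset.mem_filter] at hH
    obtain ⟨-, hle, hdeg, hone⟩ := hH
    have heq : (Finset.univ.filter (fun σ : Equiv.Perm (Fin n) => ∀ i, G.Adj i (σ i))).filter
        (fun σ => graphOf σ = H) =
        Finset.univ.filter (fun σ : Equiv.Perm (Fin n) => graphOf σ = H) := by
      ext σ
      simp only [Finset.filter_filter, Finset.mem_filter, Finset.mem_univ, true_and]
      constructor
      · exact fun h => h.2
      · intro hσ
        refine ⟨?_, hσ⟩
        intro i
        have hfp := fp_of hdeg hσ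
        have : H.Adj i (σ i) := by
          rw [← hσ, graphOf_adj]
          exact ⟨(hfp i).symm, Or.inl rfl⟩
        exact hle this
    rw [heq]
    exact fiber_card hdeg hone
  rw [Finset.sum_congr rfl hfib]
  have hmaps2 : ∀ H ∈ Finset.univ.filter
      (fun H : SimpleGraph (Fin n) => H ≤ G ∧ IsGen2Factor H),
      numCycles H ∈ Finset.range (n+1) := by
    intro H _
    rw [Finset.mem_range]
    have h1 : numCycles H ≤ Fintype.card H.ConnectedComponent := Nat.sub_le _ _
    have h2 : Fintype.card H.ConnectedComponent ≤ n := by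
      have := Fintype.card_le_of_surjective H.connectedComponentMk
        (fun c => Quot.exists_rep c)
      rwa [Fintype.card_fin] at this
    omega
  rw [← Finset.sum_fiberwise_of_maps_to hmaps2]
  apply Finset.sum_congr rfl
  intro k _
  have hcg : ∀ H ∈ (Finset.univ.filter
      (fun H : SimpleGraph (Fin n) => H ≤ G ∧ IsGen2Factor H)).filter
      (fun H => numCycles H = k), (2:ℕ) ^ numCycles H = 2 ^ k := by
    intro H hH
    rw [(Finset.mem_filter.mp hH).2]
  rw [Finset.sum_congr rfl hcg, Finset.sum_const, smul_eq_mul, mul_comm]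
  congr 1
  rw [F, Finset.filter_filter]
  congr 1
  apply Finset.filter_congr
  intro H _
  simp [and_assoc]


end Gen2FactorProof

/-- The permanent of the adjacency matrix of a simple graph `G` equals
`∑_{k ≥ 0} 2^k F_k(G)` where `F_k(G)` is the number of generalized 2-factors of `G`
with exactly `k` cycles (the terms with `k > n` all vanish). -/
theorem permanent_adjMatrix_eq_sum_gen2Factors {n : ℕ} (G : SimpleGraph (Fin n)) :
    permanent (G.adjMatrix ℕ) = ∑ k ∈ Finset.range (n + 1), 2 ^ k * F k G := by
  exact Gen2FactorProof.main G
end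

section
/- Let 0 < p ≤ q ≤ 1 and let G be an r-graph on n vertices with exactly q·C(n,r) edges, where p·C(n,r) is an integer. Consider the uniform distribution over all spanning subhypergraphs of G with exactly p·C(n,r) edges. Then the expected number of Hamiltonian cycles of a random such subhypergraph is at least H(G)·(p/q)^n·e^{-2/p}·(1-o(1)) as n → ∞; in particular H_r(n,p) ≥ (p/q)^n e^{-2/p} H(G)(1-o(1)). -/
open Finset

/-- The "r-set" of a permutation `π` of `ZMod n`: the set of `n` edges of the Hamiltonian
cycle of `K_n^r` corresponding to `π`. -/
def rset (n r : ℕ) [NeZero n] (π : Equiv.Perm (ZMod n)) : Finset (Finset (ZMod n)) :=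
  Finset.image (fun i : ZMod n =>
    Finset.image (fun j : Fin r => π (i + (j.val : ZMod n))) Finset.univ) Finset.univ

/-- The set of Hamiltonian cycles of the `r`-graph with edge set `G` on `ZMod n`, each
Hamiltonian cycle identified with its set of `n` edges. -/
def hamCycles (n r : ℕ) [NeZero n] (G : Finset (Finset (ZMod n))) :
    Finset (Finset (Finset (ZMod n))) :=
  Finset.image (rset n r)
    (Finset.univ.filter (fun π : Equiv.Perm (ZMod n) => rset n r π ⊆ G))

/-- `Hmax n r m` : the maximum number of Hamiltonian cycles over all `r`-graphs on `n`
vertices with exactly `m` edges. -/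
def Hmax (n r m : ℕ) [NeZero n] : ℕ :=
  Finset.sup (((Finset.univ : Finset (ZMod n)).powersetCard r).powersetCard m)
    (fun G => (hamCycles n r G).card)


section Aux

lemma choose2_le_chooser {r n : ℕ} (hr : 2 ≤ r) (hn : 2 * r ≤ n) :
    n.choose 2 ≤ n.choose r := by
  induction r with
  | zero => omega
  | succ k ih =>
    rcases Nat.lt_or_ge k 2 with hk | hk
    · interval_cases k
      · omega
      · exact le_rfl
    · refine (ih hk (by omega)).trans (Nat.choose_le_succ_of_lt_half_left ?_)
      omega

lemma choose_pred_le {a b : ℕ} (ha : 1 ≤ a) (hb : 1 ≤ b) :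
    (a - 1).choose (b - 1) ≤ a.choose b := by
  obtain ⟨a', rfl⟩ := Nat.exists_eq_add_of_le ha
  obtain ⟨b', rfl⟩ := Nat.exists_eq_add_of_le hb
  simp [Nat.add_comm 1, Nat.choose_succ_succ]

lemma choose_sub_mono {E m : ℕ} (d i : ℕ) (h : i + d ≤ m) (hmE : m ≤ E) :
    (E - (i + d)).choose (m - (i + d)) ≤ (E - i).choose (m - i) := by
  induction d with
  | zero => simp
  | succ d ih =>
    refine le_trans ?_ (ih (by omega))
    have h1 : E - (i + (d+1)) = (E - (i+d)) - 1 := by omega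
    have h2 : m - (i + (d+1)) = (m - (i+d)) - 1 := by omega
    rw [h1, h2]
    exact choose_pred_le (by omega) (by omega)

lemma choose_prod_eq {E m : ℕ} (n : ℕ) (hnm : n ≤ m) (hmE : m ≤ E) :
    E.choose m * ∏ i ∈ range n, (m - i) = (E - n).choose (m - n) * ∏ i ∈ range n, (E - i) := by
  induction n with
  | zero => simp
  | succ k ih =>
    have hkm : k ≤ m := by omega
    obtain ⟨a, ha⟩ : ∃ a, E - k = a + 1 := ⟨E - k - 1, by omega⟩
    obtain ⟨b, hb⟩ : ∃ b, m - k = b + 1 := ⟨m - k - 1, by omega⟩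
    have key : (E - k) * (E - k - 1).choose (m - k - 1) = (E - k).choose (m - k) * (m - k) := by
      rw [ha, hb]
      simpa using Nat.add_one_mul_choose_eq a b
    have h1 : E - (k+1) = E - k - 1 := by omega
    have h2 : m - (k+1) = m - k - 1 := by omega
    rw [prod_range_succ, prod_range_succ, ← mul_assoc, ih hkm, h1, h2]
    set C := (E - k).choose (m - k) with hC
    set X := (E - k - 1).choose (m - k - 1) with hX
    set P := ∏ i ∈ range k, (E - i) with hP
    calc C * P * (m - k) = C * (m - k) * P := by ring
      _ = (E - k) * X * P := by rw [key]
      _ = X * (P * (E - k)) := by ring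

lemma choose_ratio_ineq {E m n : ℕ} (hnm : n ≤ m) (hmE : m ≤ E) :
    E.choose m * (m - n) ^ n ≤ (E - n).choose (m - n) * E ^ n := by
  calc E.choose m * (m - n) ^ n = E.choose m * ∏ _i ∈ range n, (m - n) := by
        rw [prod_const, card_range]
    _ ≤ E.choose m * ∏ i ∈ range n, (m - i) := by
        gcongr with i hi
        · simp only [mem_range] at hi; omega
    _ = (E - n).choose (m - n) * ∏ i ∈ range n, (E - i) := choose_prod_eq n hnm hmE
    _ ≤ (E - n).choose (m - n) * ∏ _i ∈ range n, E := by
        gcongr with i hi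
        omega
    _ = (E - n).choose (m - n) * E ^ n := by rw [prod_const, card_range]

lemma count_supersets {α : Type*} [DecidableEq α] (G H : Finset α) (hHG : H ⊆ G) (m : ℕ)
    (hHm : H.card ≤ m) :
    (G.card - H.card).choose (m - H.card) ≤
      ((G.powersetCard m).filter (fun S => H ⊆ S)).card := by
  have hcard : (G \ H).card = G.card - H.card := card_sdiff_of_subset hHG
  rw [← hcard, ← card_powersetCard]
  apply Finset.card_le_card_of_injOn (fun T => T ∪ H)
  · intro T hT
    simp only [mem_coe, mem_powersetCard, mem_filter] at hT ⊢
    obtain ⟨hTsub, hTcard⟩ := hT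
    have hdisj : Disjoint T H :=
      disjoint_left.mpr (fun a haT haH => (mem_sdiff.mp (hTsub haT)).2 haH)
    refine ⟨⟨union_subset (hTsub.trans (sdiff_subset)) hHG, ?_⟩, subset_union_right⟩
    rw [card_union_of_disjoint hdisj, hTcard]
    omega
  · intro T1 h1 T2 h2 heq
    simp only [mem_coe, mem_powersetCard] at h1 h2
    have d1 : Disjoint T1 H :=
      disjoint_left.mpr (fun a haT haH => (mem_sdiff.mp (h1.1 haT)).2 haH)
    have d2 : Disjoint T2 H :=
      disjoint_left.mpr (fun a haT haH => (mem_sdiff.mp (h2.1 haT)).2 haH)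
    have : (T1 ∪ H) \ H = (T2 ∪ H) \ H := by simp only at heq; rw [heq]
    rwa [union_sdiff_right, union_sdiff_right, sdiff_eq_self_of_disjoint d1,
      sdiff_eq_self_of_disjoint d2] at this

lemma mem_hamCycles_sub {n r : ℕ} [NeZero n] {G H : Finset (Finset (ZMod n))}
    (hH : H ∈ hamCycles n r G) : H ⊆ G ∧ H.card ≤ n := by
  simp only [hamCycles, mem_image, mem_filter, mem_univ, true_and] at hH
  obtain ⟨π, hsub, rfl⟩ := hH
  refine ⟨hsub, ?_⟩
  calc (rset n r π).card ≤ (Finset.univ : Finset (ZMod n)).card := Finset.card_image_le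
    _ = n := by rw [card_univ, ZMod.card]

lemma mem_hamCycles_of_subset {n r : ℕ} [NeZero n] {G S H : Finset (Finset (ZMod n))}
    (hH : H ∈ hamCycles n r G) (hHS : H ⊆ S) : H ∈ hamCycles n r S := by
  simp only [hamCycles, mem_image, mem_filter, mem_univ, true_and] at hH ⊢
  obtain ⟨π, hsub, rfl⟩ := hH
  exact ⟨π, hHS, rfl⟩

lemma sum_hamCycles_lower {n r m : ℕ} [NeZero n] (G : Finset (Finset (ZMod n)))
    (hnm : n ≤ m) (hmE : m ≤ G.card) :
    (hamCycles n r G).card * ((G.card - n).choose (m - n)) ≤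
      ∑ S ∈ G.powersetCard m, (hamCycles n r S).card := by
  have step1 : ∀ S ∈ G.powersetCard m,
      ((hamCycles n r G).filter (fun H => H ⊆ S)).card ≤ (hamCycles n r S).card := by
    intro S _
    exact card_le_card (fun H hH => by
      simp only [mem_filter] at hH
      exact mem_hamCycles_of_subset hH.1 hH.2)
  calc (hamCycles n r G).card * ((G.card - n).choose (m - n))
      = ∑ _H ∈ hamCycles n r G, (G.card - n).choose (m - n) := by
        rw [sum_const, smul_eq_mul]
    _ ≤ ∑ H ∈ hamCycles n r G, ((G.powersetCard m).filter (fun S => H ⊆ S)).card := by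
        apply sum_le_sum
        intro H hH
        obtain ⟨hHG, hHn⟩ := mem_hamCycles_sub hH
        calc (G.card - n).choose (m - n)
            = (G.card - (H.card + (n - H.card))).choose (m - (H.card + (n - H.card))) := by
              congr 1 <;> omega
          _ ≤ (G.card - H.card).choose (m - H.card) := choose_sub_mono _ _ (by omega) hmE
          _ ≤ _ := count_supersets G H hHG m (by omega)
    _ = ∑ H ∈ hamCycles n r G, ∑ S ∈ G.powersetCard m, (if H ⊆ S then 1 else 0) :=
        sum_congr rfl fun H _ => card_filter _ _
    _ = ∑ S ∈ G.powersetCard m, ∑ H ∈ hamCycles n r G, (if H ⊆ S then 1 else 0) :=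
        sum_comm
    _ = ∑ S ∈ G.powersetCard m, ((hamCycles n r G).filter (fun H => H ⊆ S)).card :=
        sum_congr rfl fun S _ => (card_filter _ _).symm
    _ ≤ ∑ S ∈ G.powersetCard m, (hamCycles n r S).card := sum_le_sum step1

lemma exp_le_one_sub {x : ℝ} (h1 : x < 1) :
    Real.exp (-(x / (1 - x))) ≤ 1 - x := by
  have hx : 0 < 1 - x := by linarith
  have h : x / (1 - x) + 1 ≤ Real.exp (x / (1 - x)) := Real.add_one_le_exp _
  have h2 : (1 : ℝ) / (1 - x) ≤ Real.exp (x / (1 - x)) := by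
    have heq : x / (1 - x) + 1 = 1 / (1 - x) := by field_simp; ring
    linarith [heq ▸ h]
  rw [Real.exp_neg]
  have hpos : (0:ℝ) < 1 / (1 - x) := by positivity
  calc (Real.exp (x / (1 - x)))⁻¹ ≤ ((1:ℝ) / (1 - x))⁻¹ := inv_anti₀ hpos h2
    _ = 1 - x := by field_simp

end Aux

set_option maxHeartbeats 1000000 in
/-- Let `0 < p ≤ q ≤ 1` and let `G` be an `r`-graph on `n` vertices with exactly
`q·C(n,r)` edges, where `m = p·C(n,r)` is an integer.  The average number of Hamiltonian
cycles over all spanning subhypergraphs of `G` with exactly `m` edges is at least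
`H(G)·(p/q)^n·e^{-2/p}·(1-o(1))` as `n → ∞`; in particular
`H_r(n,p) ≥ (p/q)^n e^{-2/p} H(G)(1-o(1))`. -/
theorem expected_ham_of_random_subhypergraph (r : ℕ) (hr : 2 ≤ r) (p q : ℝ)
    (hp : 0 < p) (hpq : p ≤ q) (hq : q ≤ 1) :
    ∀ ε : ℝ, 0 < ε → ∃ N : ℕ, ∀ (n : ℕ) [NeZero n], N ≤ n →
      ∀ m : ℕ, (m : ℝ) = p * (n.choose r) →
      ∀ G ∈ ((Finset.univ : Finset (ZMod n)).powersetCard r).powerset,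
        (G.card : ℝ) = q * (n.choose r) →
        ((∑ S ∈ G.powersetCard m, ((hamCycles n r S).card : ℝ)) / (G.card.choose m) ≥
            ((hamCycles n r G).card : ℝ) * (p / q) ^ n * Real.exp (-2 / p) * (1 - ε)) ∧
        ((Hmax n r m : ℝ) ≥
            ((hamCycles n r G).card : ℝ) * (p / q) ^ n * Real.exp (-2 / p) * (1 - ε)) := by
  intro ε hε
  have hq0 : 0 < q := lt_of_lt_of_le hp hpq
  rcases le_or_gt 1 ε with hε1 | hε1
  · -- trivial case : `1 ≤ ε`, the right-hand side is nonpositive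
    refine ⟨1, fun n _ hn m hm G hG hGcard => ?_⟩
    have hRHS : ((hamCycles n r G).card : ℝ) * (p / q) ^ n * Real.exp (-2 / p) * (1 - ε) ≤ 0 :=
      mul_nonpos_iff.mpr (Or.inl ⟨by positivity, by linarith⟩)
    constructor
    · exact le_trans hRHS (by positivity)
    · exact le_trans hRHS (by positivity)
  · -- main case : `0 < ε < 1`
    have hε2 : 0 < 1 - ε := by linarith
    obtain ⟨A, hA⟩ : ∃ A : ℝ, A = 2 / p - Real.log (1 - ε) := ⟨_, rfl⟩
    have hlog : Real.log (1 - ε) < 0 := Real.log_neg hε2 (by linarith)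
    have hA0 : 2 / p < A := by rw [hA]; linarith
    have hApos : 0 < A := lt_trans (by positivity) hA0
    obtain ⟨c, hc⟩ : ∃ c : ℝ, c = A * p / 2 := ⟨_, rfl⟩
    have hc1 : 1 < c := by
      have h2A : 2 < A * p := by
        have h := hA0; rw [div_lt_iff₀ hp] at h; linarith
      rw [hc]; linarith
    refine ⟨⌈(A + c) / (c - 1)⌉₊ + ⌈4 / p⌉₊ + 2 * r + 4, fun n _ hn m hm G hG hGcard => ?_⟩
    have hn1 : 1 ≤ n := by omega
    have hn1R : (1:ℝ) ≤ (n:ℝ) := by exact_mod_cast hn1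
    have hrn : 2 * r ≤ n := by omega
    have hCpos : 0 < ((n.choose r : ℕ) : ℝ) := by
      exact_mod_cast Nat.choose_pos (le_trans (by omega) hrn)
    -- `m` is at least `p·n(n-1)/2`
    have hch2 : ((n.choose 2 : ℕ) : ℝ) ≤ ((n.choose r : ℕ) : ℝ) := by
      exact_mod_cast choose2_le_chooser hr hrn
    have hcast2 : ((n.choose 2 : ℕ) : ℝ) = (n:ℝ) * ((n:ℝ) - 1) / 2 := Nat.cast_choose_two ℝ n
    have hm2 : p * ((n:ℝ) * ((n:ℝ) - 1) / 2) ≤ (m : ℝ) := by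
      rw [hm, ← hcast2]
      exact mul_le_mul_of_nonneg_left hch2 hp.le
    -- `n ≥ 4/p + 4`
    have hnR : (4:ℝ)/p + 4 ≤ (n:ℝ) := by
      have h1 : (4:ℝ)/p ≤ (⌈4/p⌉₊ : ℝ) := Nat.le_ceil _
      have h2 : ((⌈4/p⌉₊ + 4 : ℕ) : ℝ) ≤ (n:ℝ) := by exact_mod_cast (by omega : ⌈4/p⌉₊ + 4 ≤ n)
      push_cast at h2
      linarith
    have e1 : (4:ℝ) ≤ p * ((n:ℝ) - 1) := by
      have h4 : p * ((4:ℝ)/p + 3) = 4 + 3 * p := by field_simp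
      have h5 : p * ((4:ℝ)/p + 3) ≤ p * ((n:ℝ) - 1) :=
        mul_le_mul_of_nonneg_left (by linarith) hp.le
      linarith
    have hmn' : (n:ℝ) + 1 ≤ (m:ℝ) := by
      nlinarith [mul_nonneg (by linarith : (0:ℝ) ≤ p * ((n:ℝ) - 1) - 4) (by positivity : (0:ℝ) ≤ (n:ℝ))]
    have hmn : n < m := by
      have : n + 1 ≤ m := by exact_mod_cast hmn'
      omega
    have hmE : m ≤ G.card := by
      have h : (m:ℝ) ≤ (G.card : ℝ) := by
        rw [hm, hGcard]
        exact mul_le_mul_of_nonneg_right hpq (by positivity)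
      exact_mod_cast h
    -- the key quantitative estimate : `n² ≤ A (m - n)`
    have hnA : (A + c) / (c - 1) ≤ (n:ℝ) := by
      refine le_trans (Nat.le_ceil _) ?_
      exact_mod_cast (by omega : ⌈(A + c)/(c-1)⌉₊ ≤ n)
    have h5 : A + c ≤ (c - 1) * (n:ℝ) := by
      rw [div_le_iff₀ (by linarith)] at hnA
      linarith
    have h6 : A * (p * ((n:ℝ) * ((n:ℝ) - 1) / 2)) ≤ A * (m:ℝ) :=
      mul_le_mul_of_nonneg_left hm2 hApos.le
    have h7 : A * (p * ((n:ℝ) * ((n:ℝ) - 1) / 2)) = (n:ℝ) * (c * ((n:ℝ) - 1)) := by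
      rw [hc]; ring
    have h9 : (n:ℝ) * ((n:ℝ) + A) ≤ (n:ℝ) * (c * ((n:ℝ) - 1)) :=
      mul_le_mul_of_nonneg_left (by nlinarith [h5]) (by positivity)
    have h10 : (n:ℝ) * ((n:ℝ) + A) = (n:ℝ)^2 + A * (n:ℝ) := by ring
    have hkey : (n:ℝ)^2 + A * (n:ℝ) ≤ A * (m:ℝ) := by linarith
    have hmn0 : (0:ℝ) < (m:ℝ) - (n:ℝ) := by linarith
    have hfrac : (n:ℝ)^2 / ((m:ℝ) - (n:ℝ)) ≤ A := by
      rw [div_le_iff₀ hmn0]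
      have h11 : A * ((m:ℝ) - (n:ℝ)) = A * (m:ℝ) - A * (n:ℝ) := by ring
      linarith
    -- notation
    have hm0 : (0:ℝ) < (m:ℝ) := by linarith
    have hE0 : (0:ℝ) < (G.card : ℝ) := by
      have h : (m:ℝ) ≤ (G.card : ℝ) := Nat.cast_le.mpr hmE
      linarith
    have hD : (0:ℝ) < ((G.card.choose m : ℕ) : ℝ) := by
      exact_mod_cast Nat.choose_pos hmE
    -- the binomial-ratio bound
    have hsub : ((m - n : ℕ) : ℝ) = (m:ℝ) - (n:ℝ) := Nat.cast_sub hmn.le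
    have hratio : ((G.card.choose m : ℕ) : ℝ) * (((m:ℝ) - n) / (G.card : ℝ))^n ≤
        (((G.card - n).choose (m - n) : ℕ) : ℝ) := by
      have hcast : ((G.card.choose m : ℕ) : ℝ) * (((m - n : ℕ) : ℝ))^n ≤
          (((G.card - n).choose (m - n) : ℕ) : ℝ) * ((G.card : ℕ) : ℝ)^n := by
        exact_mod_cast choose_ratio_ineq hmn.le hmE
      rw [div_pow, mul_div_assoc', div_le_iff₀ (by positivity)]
      calc ((G.card.choose m : ℕ) : ℝ) * ((m:ℝ) - n)^n
          = ((G.card.choose m : ℕ) : ℝ) * (((m - n : ℕ) : ℝ))^n := by rw [hsub]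
        _ ≤ _ := hcast
    -- the analytic bound
    have hxval : ((m:ℝ) - n) / (G.card : ℝ) = (p / q) * (1 - (n:ℝ)/(m:ℝ)) := by
      rw [hGcard]
      rw [hm]
      field_simp
    have hx1 : (n:ℝ)/(m:ℝ) < 1 := by rw [div_lt_one hm0]; linarith
    have hone : Real.exp (-((n:ℝ) * (((n:ℝ)/(m:ℝ)) / (1 - (n:ℝ)/(m:ℝ))))) ≤
        (1 - (n:ℝ)/(m:ℝ))^n := by
      have h1 : Real.exp (-(((n:ℝ)/(m:ℝ)) / (1 - (n:ℝ)/(m:ℝ))))^n ≤ (1 - (n:ℝ)/(m:ℝ))^n :=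
        pow_le_pow_left₀ (Real.exp_nonneg _) (exp_le_one_sub hx1) n
      rwa [← Real.exp_nat_mul, mul_neg] at h1
    have harg : (n:ℝ) * (((n:ℝ)/(m:ℝ)) / (1 - (n:ℝ)/(m:ℝ))) = (n:ℝ)^2 / ((m:ℝ) - n) := by
      have h1 : 1 - (n:ℝ)/(m:ℝ) = ((m:ℝ) - n)/(m:ℝ) := by field_simp
      rw [h1]
      field_simp
    have hexp1 : Real.exp (-A) ≤ Real.exp (-((n:ℝ)^2 / ((m:ℝ) - n))) :=
      Real.exp_le_exp.mpr (by linarith)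
    have hexpA : Real.exp (-A) = Real.exp (-2/p) * (1 - ε) := by
      rw [hA, show -(2/p - Real.log (1-ε)) = -2/p + Real.log (1-ε) by ring,
        Real.exp_add, Real.exp_log hε2]
    have hK : (p / q)^n * Real.exp (-2/p) * (1 - ε) ≤ (((m:ℝ) - n) / (G.card : ℝ))^n := by
      have h1 : Real.exp (-2/p) * (1 - ε) ≤ (1 - (n:ℝ)/(m:ℝ))^n := by
        rw [← hexpA]
        exact le_trans (by rw [harg]; exact hexp1) hone
      calc (p / q)^n * Real.exp (-2/p) * (1 - ε)
          = (p/q)^n * (Real.exp (-2/p) * (1 - ε)) := by ring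
        _ ≤ (p/q)^n * (1 - (n:ℝ)/(m:ℝ))^n := by
            exact mul_le_mul_of_nonneg_left h1 (by positivity)
        _ = ((p/q) * (1 - (n:ℝ)/(m:ℝ)))^n := (mul_pow _ _ _).symm
        _ = (((m:ℝ) - n) / (G.card : ℝ))^n := by rw [hxval]
    -- lower bound on the sum
    have hHc0 : (0:ℝ) ≤ ((hamCycles n r G).card : ℝ) := by positivity
    have hnum : ((hamCycles n r G).card : ℝ) * (((G.card - n).choose (m - n) : ℕ) : ℝ) ≤
        ∑ S ∈ G.powersetCard m, ((hamCycles n r S).card : ℝ) := by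
      exact_mod_cast sum_hamCycles_lower (r := r) G hmn.le hmE
    have goal1 : (∑ S ∈ G.powersetCard m, ((hamCycles n r S).card : ℝ)) / (G.card.choose m) ≥
        ((hamCycles n r G).card : ℝ) * (p / q) ^ n * Real.exp (-2 / p) * (1 - ε) := by
      have hchain : ((hamCycles n r G).card : ℝ) * (p / q) ^ n * Real.exp (-2 / p) * (1 - ε) ≤
          ((hamCycles n r G).card : ℝ) * (((G.card - n).choose (m - n) : ℕ) : ℝ) /
            ((G.card.choose m : ℕ) : ℝ) := by
        rw [le_div_iff₀ hD]
        calc ((hamCycles n r G).card : ℝ) * (p / q) ^ n * Real.exp (-2 / p) * (1 - ε) *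
              ((G.card.choose m : ℕ) : ℝ)
            = ((hamCycles n r G).card : ℝ) *
                (((p / q) ^ n * Real.exp (-2 / p) * (1 - ε)) * ((G.card.choose m : ℕ) : ℝ)) := by
              ring
          _ ≤ ((hamCycles n r G).card : ℝ) *
                ((((m:ℝ) - n) / (G.card : ℝ))^n * ((G.card.choose m : ℕ) : ℝ)) := by
              refine mul_le_mul_of_nonneg_left ?_ hHc0
              exact mul_le_mul_of_nonneg_right hK hD.le
          _ = ((hamCycles n r G).card : ℝ) *
                (((G.card.choose m : ℕ) : ℝ) * (((m:ℝ) - n) / (G.card : ℝ))^n) := by ring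
          _ ≤ ((hamCycles n r G).card : ℝ) * (((G.card - n).choose (m - n) : ℕ) : ℝ) :=
              mul_le_mul_of_nonneg_left hratio hHc0
      refine le_trans hchain ?_
      gcongr
    refine ⟨goal1, ?_⟩
    -- the `Hmax` bound
    have hub : ∀ S ∈ G.powersetCard m, (hamCycles n r S).card ≤ Hmax n r m := by
      intro S hS
      rw [mem_powersetCard] at hS
      unfold Hmax
      exact Finset.le_sup (f := fun G => (hamCycles n r G).card) (mem_powersetCard.mpr ⟨hS.1.trans (mem_powerset.mp hG), hS.2⟩)
    have hsum_ub : (∑ S ∈ G.powersetCard m, ((hamCycles n r S).card : ℝ)) ≤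
        ((Hmax n r m : ℕ) : ℝ) * ((G.card.choose m : ℕ) : ℝ) := by
      have h : (∑ S ∈ G.powersetCard m, (hamCycles n r S).card) ≤
          (G.card.choose m) * Hmax n r m := by
        calc (∑ S ∈ G.powersetCard m, (hamCycles n r S).card)
            ≤ ∑ _S ∈ G.powersetCard m, Hmax n r m := sum_le_sum hub
          _ = (G.powersetCard m).card * Hmax n r m := by rw [sum_const, smul_eq_mul]
          _ = (G.card.choose m) * Hmax n r m := by rw [card_powersetCard]
      calc (∑ S ∈ G.powersetCard m, ((hamCycles n r S).card : ℝ))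
          = (((∑ S ∈ G.powersetCard m, (hamCycles n r S).card : ℕ)) : ℝ) := by push_cast; rfl
        _ ≤ (((G.card.choose m) * Hmax n r m : ℕ) : ℝ) := by exact_mod_cast h
        _ = ((Hmax n r m : ℕ) : ℝ) * ((G.card.choose m : ℕ) : ℝ) := by push_cast; ring
    have havg : (∑ S ∈ G.powersetCard m, ((hamCycles n r S).card : ℝ)) / (G.card.choose m) ≤
        ((Hmax n r m : ℕ) : ℝ) := by
      rw [div_le_iff₀ hD]
      exact hsum_ub
    exact le_trans goal1 havg
end

section
/- Let L be an (n, r, k, β, δ)-packing of K_n^r with β ≤ 1/2 - δ. Then for all sufficiently large n, L can be partitioned into |L|/k parts of size k each such that any two r-graphs in the same part are vertex-disjoint. -/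
open Finset

/-- An element of a packing: an `r`-subgraph of `K_n^r`, given by its vertex set and its
edge set. -/
abbrev Subgraph (n : ℕ) := Finset (Fin n) × Finset (Finset (Fin n))

/-- An `(n, r, k, β, δ)`-packing of `K_n^r`: a set `L` of pairwise edge-disjoint
`r`-subgraphs of `K_n^r` such that (i) every element has `q = ⌈n^β⌉` vertices; (ii) every
vertex set `X` with `1 ≤ |X| ≤ r-1` inside an element `B` has degree at least
`n^{-δ}·C(q-|X|, r-|X|)` in `B`; (iii) at most half the edges of `K_n^r` lie in elements
of `L`; (iv) `|L| ≥ n^{r-rβ}` and `k ∣ |L|`; (v) all elements have the same number of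
edges. -/
def IsPacking (n r k : ℕ) (β δ : ℝ) (L : Finset (Subgraph n)) : Prop :=
  (∀ B ∈ L, B.1.card = ⌈(n : ℝ) ^ β⌉₊ ∧ ∀ e ∈ B.2, e ⊆ B.1 ∧ e.card = r) ∧
  (∀ B ∈ L, ∀ B' ∈ L, B ≠ B' → Disjoint B.2 B'.2) ∧
  (∀ B ∈ L, ∀ X ⊆ B.1, 1 ≤ X.card → X.card ≤ r - 1 →
    (n : ℝ) ^ (-δ) * ((⌈(n : ℝ) ^ β⌉₊ - X.card).choose (r - X.card) : ℝ) ≤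
      ((B.2.filter (fun e => X ⊆ e)).card : ℝ)) ∧
  (2 * ∑ B ∈ L, B.2.card ≤ n.choose r) ∧
  ((n : ℝ) ^ ((r : ℝ) - r * β) ≤ (L.card : ℝ) ∧ k ∣ L.card) ∧
  (∀ B ∈ L, ∀ B' ∈ L, B.2.card = B'.2.card)

section Combinatorial

variable {α : Type*} [DecidableEq α]

/-- A partition of `L` into parts of size `k`. -/
def PackPart (k : ℕ) (L : Finset α) (P : Finset (Finset α)) : Prop :=
  (∀ Q ∈ P, Q.card = k) ∧ (∀ Q ∈ P, Q ⊆ L) ∧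
  (∀ Q ∈ P, ∀ Q' ∈ P, Q ≠ Q' → Disjoint Q Q') ∧ (∀ a ∈ L, ∃ Q ∈ P, a ∈ Q)

lemma packPart_card {k : ℕ} {L : Finset α} {P : Finset (Finset α)}
    (hP : PackPart k L P) : L.card = P.card * k := by
  obtain ⟨h1, h2, h3, h4⟩ := hP
  have hLeq : L = P.biUnion (fun Q => Q) := by
    ext a
    simp only [Finset.mem_biUnion]
    exact ⟨fun ha => h4 a ha, fun ⟨Q, hQ, haQ⟩ => h2 Q hQ haQ⟩
  rw [hLeq, Finset.card_biUnion (fun Q hQ Q' hQ' hne => h3 Q hQ Q' hQ' hne)]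
  rw [Finset.sum_congr rfl (fun Q hQ => h1 Q hQ), Finset.sum_const, smul_eq_mul]

lemma exists_packPart (k : ℕ) (hk : 1 ≤ k) :
    ∀ L : Finset α, k ∣ L.card → ∃ P, PackPart k L P := by
  intro L
  induction L using Finset.strongInduction with
  | _ L ih =>
    intro hdvd
    rcases L.eq_empty_or_nonempty with rfl | hne
    · exact ⟨∅, by simp [PackPart]⟩
    · have hkL : k ≤ L.card := Nat.le_of_dvd (Finset.card_pos.2 hne) hdvd
      obtain ⟨S, hSL, hScard⟩ := Finset.exists_subset_card_eq hkL
      have hSne : S.Nonempty := Finset.card_pos.1 (by omega)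
      have hss : L \ S ⊂ L := by
        obtain ⟨x, hx⟩ := hSne
        refine Finset.ssubset_iff_of_subset (Finset.sdiff_subset) |>.2 ⟨x, hSL hx, by simp [hx]⟩
      have hdvd' : k ∣ (L \ S).card := by
        rw [Finset.card_sdiff_of_subset hSL, hScard]
        exact Nat.dvd_sub hdvd dvd_rfl
      obtain ⟨P, h1, h2, h3, h4⟩ := ih _ hss hdvd'
      refine ⟨insert S P, ?_, ?_, ?_, ?_⟩
      · intro Q hQ
        rcases Finset.mem_insert.1 hQ with rfl | hQ
        · exact hScard
        · exact h1 Q hQ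
      · intro Q hQ
        rcases Finset.mem_insert.1 hQ with rfl | hQ
        · exact hSL
        · exact (h2 Q hQ).trans Finset.sdiff_subset
      · intro T hT T' hT' hne'
        rcases Finset.mem_insert.1 hT with h5 | h5
        · rcases Finset.mem_insert.1 hT' with h6 | h6
          · exact absurd (h5.trans h6.symm) hne'
          · subst h5
            exact Finset.disjoint_left.2 fun a ha ha' =>
              (Finset.mem_sdiff.1 (h2 T' h6 ha')).2 ha
        · rcases Finset.mem_insert.1 hT' with h6 | h6
          · subst h6
            exact Finset.disjoint_left.2 fun a ha ha' =>
              (Finset.mem_sdiff.1 (h2 T h5 ha)).2 ha'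
          · exact h3 T h5 T' h6 hne'
      · intro a ha
        by_cases haS : a ∈ S
        · exact ⟨S, Finset.mem_insert_self _ _, haS⟩
        · obtain ⟨Q, hQ, haQ⟩ := h4 a (Finset.mem_sdiff.2 ⟨ha, haS⟩)
          exact ⟨Q, Finset.mem_insert_of_mem hQ, haQ⟩

variable (G : α → α → Prop) [DecidableRel G]

/-- Number of ordered conflicting pairs inside a part. -/
def pairCost (Q : Finset α) : ℕ :=
  ((Q ×ˢ Q).filter (fun p => p.1 ≠ p.2 ∧ G p.1 p.2)).card

def partCost (P : Finset (Finset α)) : ℕ := ∑ Q ∈ P, pairCost G Q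

lemma pairCost_mono {Q Q' : Finset α} (h : Q ⊆ Q') : pairCost G Q ≤ pairCost G Q' :=
  Finset.card_le_card (Finset.filter_subset_filter _ (Finset.product_subset_product h h))

lemma pairCost_insert {Q : Finset α} {x : α}
    (hx : ∀ y ∈ Q, ¬ G x y ∧ ¬ G y x) :
    pairCost G (insert x Q) = pairCost G Q := by
  unfold pairCost
  congr 1
  ext ⟨a, b⟩
  simp only [Finset.mem_filter, Finset.mem_product, Finset.mem_insert]
  constructor
  · rintro ⟨⟨ha, hb⟩, hne, hG⟩
    rcases ha with rfl | ha
    · rcases hb with rfl | hb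
      · exact absurd rfl hne
      · exact absurd hG (hx _ hb).1
    · rcases hb with rfl | hb
      · exact absurd hG (hx _ ha).2
      · exact ⟨⟨ha, hb⟩, hne, hG⟩
  · rintro ⟨⟨ha, hb⟩, h⟩
    exact ⟨⟨Or.inr ha, Or.inr hb⟩, h⟩

lemma pairCost_erase_lt {Q : Finset α} {u v : α} (hu : u ∈ Q) (hv : v ∈ Q)
    (hne : u ≠ v) (hG : G u v) : pairCost G (Q.erase u) < pairCost G Q := by
  have hsub : ((Q.erase u ×ˢ Q.erase u).filter (fun p => p.1 ≠ p.2 ∧ G p.1 p.2)) ⊆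
      ((Q ×ˢ Q).filter (fun p => p.1 ≠ p.2 ∧ G p.1 p.2)) :=
    Finset.filter_subset_filter _
      (Finset.product_subset_product (Finset.erase_subset _ _) (Finset.erase_subset _ _))
  refine Finset.card_lt_card ((Finset.ssubset_iff_of_subset hsub).2 ⟨(u, v), ?_, ?_⟩)
  · simp [Finset.mem_filter, Finset.mem_product, hu, hv, hne, hG]
  · simp [Finset.mem_filter, Finset.mem_product]

lemma conflictFree_of_partCost_zero {P : Finset (Finset α)} (h : partCost G P = 0) :
    ∀ Q ∈ P, ∀ a ∈ Q, ∀ b ∈ Q, a ≠ b → ¬ G a b := by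
  intro Q hQ a ha b hb hne hG
  have h0 : pairCost G Q = 0 := Finset.sum_eq_zero_iff.1 h Q hQ
  have hm : ((a, b) : α × α) ∈ (Q ×ˢ Q).filter (fun p => p.1 ≠ p.2 ∧ G p.1 p.2) := by
    simp [Finset.mem_filter, Finset.mem_product, ha, hb, hne, hG]
  rw [Finset.card_eq_zero.1 h0] at hm
  exact absurd hm (Finset.notMem_empty _)

lemma exists_conflict_free_packPart (hsym : ∀ a b, G a b → G b a)
    (L : Finset α) (k D : ℕ) (hk : 1 ≤ k)
    (hdeg : ∀ a ∈ L, (L.filter (fun b => b ≠ a ∧ G a b)).card ≤ D)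
    (hcard : k * (k * D + 1) < L.card) (hdvd : k ∣ L.card) :
    ∃ P, PackPart k L P ∧ ∀ Q ∈ P, ∀ a ∈ Q, ∀ b ∈ Q, a ≠ b → ¬ G a b := by
  obtain ⟨P₀, hP₀⟩ := exists_packPart k hk L hdvd
  suffices h : ∀ c P, partCost G P ≤ c → PackPart k L P →
      ∃ P', PackPart k L P' ∧ ∀ Q ∈ P', ∀ a ∈ Q, ∀ b ∈ Q, a ≠ b → ¬ G a b from
    h _ P₀ le_rfl hP₀
  intro c
  induction c with
  | zero =>
    intro P hc hP
    exact ⟨P, hP, conflictFree_of_partCost_zero G (Nat.le_zero.1 hc)⟩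
  | succ c ih =>
    intro P hc hP
    by_cases h0 : partCost G P = 0
    · exact ⟨P, hP, conflictFree_of_partCost_zero G h0⟩
    -- find a conflicting pair
    have hx : ∃ Q ∈ P, 0 < pairCost G Q := by
      by_contra hcon
      push_neg at hcon
      exact h0 (Finset.sum_eq_zero fun Q hQ => Nat.le_zero.1 (hcon Q hQ))
    obtain ⟨Q, hQP, hQpos⟩ := hx
    obtain ⟨⟨u, v⟩, hmem⟩ := Finset.card_pos.1 hQpos
    rw [Finset.mem_filter, Finset.mem_product] at hmem
    obtain ⟨⟨hu, hv⟩, hne, hG⟩ := hmem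
    simp only at hu hv hne hG
    obtain ⟨hcardQ, hsubQ, hdisjP, hcover⟩ := hP
    -- count parts
    have hcardL : L.card = P.card * k := packPart_card ⟨hcardQ, hsubQ, hdisjP, hcover⟩
    have hPcard : k * D + 1 < P.card := by
      rw [hcardL] at hcard
      by_contra hcon
      push_neg at hcon
      have h2 : P.card * k ≤ (k * D + 1) * k := Nat.mul_le_mul_right k hcon
      rw [mul_comm (k * D + 1) k] at h2
      omega
    -- bad parts: those containing a conflict with Q
    classical
    set Bad : Finset (Finset α) := P.filter (fun Q' => ∃ x ∈ Q', ∃ w ∈ Q, x ≠ w ∧ G w x)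
      with hBadDef
    have hBadcard : Bad.card ≤ k * D := by
      have h1 : Bad.card ≤ ∑ Q' ∈ Bad, (Q'.filter (fun x => ∃ w ∈ Q, x ≠ w ∧ G w x)).card := by
        have h1' := Finset.card_nsmul_le_sum Bad
          (fun Q' => (Q'.filter (fun x => ∃ w ∈ Q, x ≠ w ∧ G w x)).card) 1 ?_
        · simpa using h1'
        · intro Q' hQ'
          obtain ⟨x, hx, hgx⟩ := (Finset.mem_filter.1 hQ').2
          exact Finset.card_pos.2 ⟨x, Finset.mem_filter.2 ⟨hx, hgx⟩⟩
      have h2 : ∑ Q' ∈ Bad, (Q'.filter (fun x => ∃ w ∈ Q, x ≠ w ∧ G w x)).card =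
          (Bad.biUnion (fun Q' => Q'.filter (fun x => ∃ w ∈ Q, x ≠ w ∧ G w x))).card :=
        (Finset.card_biUnion (fun Q1 hQ1 Q2 hQ2 hne12 =>
          Finset.disjoint_filter_filter
            (hdisjP _ (Finset.mem_filter.1 hQ1).1 _ (Finset.mem_filter.1 hQ2).1 hne12))).symm
      have h3 : Bad.biUnion (fun Q' => Q'.filter (fun x => ∃ w ∈ Q, x ≠ w ∧ G w x)) ⊆
          L.filter (fun x => ∃ w ∈ Q, x ≠ w ∧ G w x) := by
        intro x hx
        rw [Finset.mem_biUnion] at hx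
        obtain ⟨Q', hQ', hx⟩ := hx
        rw [Finset.mem_filter] at hx ⊢
        exact ⟨hsubQ _ (Finset.mem_filter.1 hQ').1 hx.1, hx.2⟩
      have h4 : L.filter (fun x => ∃ w ∈ Q, x ≠ w ∧ G w x) ⊆
          Q.biUnion (fun w => L.filter (fun x => x ≠ w ∧ G w x)) := by
        intro x hx
        rw [Finset.mem_filter] at hx
        obtain ⟨hxL, w, hwQ, hxw, hGwx⟩ := hx
        exact Finset.mem_biUnion.2 ⟨w, hwQ, Finset.mem_filter.2 ⟨hxL, hxw, hGwx⟩⟩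
      have h5 := Finset.card_biUnion_le (s := Q) (t := fun w => L.filter (fun x => x ≠ w ∧ G w x))
      have h6 : ∑ w ∈ Q, (L.filter (fun x => x ≠ w ∧ G w x)).card ≤ k * D := by
        calc ∑ w ∈ Q, (L.filter (fun x => x ≠ w ∧ G w x)).card
            ≤ ∑ _w ∈ Q, D := Finset.sum_le_sum (fun w hw => hdeg w (hsubQ _ hQP hw))
          _ = k * D := by rw [Finset.sum_const, hcardQ _ hQP, smul_eq_mul]
      have h34 := Finset.card_le_card (h3.trans h4)
      omega
    -- pick a clean part Q'
    have hQBad : Q ∈ Bad := Finset.mem_filter.2 ⟨hQP, v, hv, u, hu, Ne.symm hne, hG⟩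
    have hPBne : (P \ Bad).Nonempty := by
      rw [← Finset.card_pos]
      have := Finset.le_card_sdiff Bad P
      omega
    obtain ⟨Q', hQ'mem⟩ := hPBne
    rw [Finset.mem_sdiff] at hQ'mem
    obtain ⟨hQ'P, hQ'notBad⟩ := hQ'mem
    have hQ'neQ : Q' ≠ Q := fun h => hQ'notBad (h ▸ hQBad)
    have hdisjQQ' : Disjoint Q Q' := hdisjP _ hQP _ hQ'P (Ne.symm hQ'neQ)
    have hclean : ∀ x ∈ Q', ∀ w ∈ Q, ¬ G w x := by
      intro x hx w hw
      have hxw : x ≠ w := fun h => Finset.disjoint_left.1 hdisjQQ' hw (h ▸ hx)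
      intro hGwx
      exact hQ'notBad (Finset.mem_filter.2 ⟨hQ'P, x, hx, w, hw, hxw, hGwx⟩)
    have hQ'ne : Q'.Nonempty := Finset.card_pos.1 (by rw [hcardQ _ hQ'P]; omega)
    obtain ⟨w, hwQ'⟩ := hQ'ne
    have hwQ : w ∉ Q := fun h => Finset.disjoint_left.1 hdisjQQ' h hwQ'
    have huQ' : u ∉ Q' := fun h => Finset.disjoint_left.1 hdisjQQ' hu h
    have huw : u ≠ w := fun h => hwQ (h ▸ hu)
    -- the swap
    set Qn : Finset α := insert w (Q.erase u) with hQnDef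
    set Q'n : Finset α := insert u (Q'.erase w) with hQ'nDef
    set rest : Finset (Finset α) := (P.erase Q).erase Q' with hrestDef
    set Pn : Finset (Finset α) := insert Qn (insert Q'n rest) with hPnDef
    have hrest : ∀ R ∈ rest, R ∈ P ∧ R ≠ Q ∧ R ≠ Q' := by
      intro R hR
      rw [Finset.mem_erase, Finset.mem_erase] at hR
      exact ⟨hR.2.2, hR.2.1, hR.1⟩
    have hQnsub : Qn ⊆ Q ∪ Q' := by
      intro a ha
      rcases Finset.mem_insert.1 ha with rfl | ha
      · exact Finset.mem_union_right _ hwQ'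
      · exact Finset.mem_union_left _ (Finset.erase_subset _ _ ha)
    have hQ'nsub : Q'n ⊆ Q ∪ Q' := by
      intro a ha
      rcases Finset.mem_insert.1 ha with rfl | ha
      · exact Finset.mem_union_left _ hu
      · exact Finset.mem_union_right _ (Finset.erase_subset _ _ ha)
    have hQncard : Qn.card = k := by
      rw [hQnDef, Finset.card_insert_of_notMem (fun h => hwQ (Finset.erase_subset _ _ h)),
        Finset.card_erase_of_mem hu, hcardQ _ hQP]
      have := hk
      omega
    have hQ'ncard : Q'n.card = k := by
      rw [hQ'nDef, Finset.card_insert_of_notMem (fun h => huQ' (Finset.erase_subset _ _ h)),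
        Finset.card_erase_of_mem hwQ', hcardQ _ hQ'P]
      omega
    have hdisjQnQ'n : Disjoint Qn Q'n := by
      rw [Finset.disjoint_left]
      intro a ha ha'
      rcases Finset.mem_insert.1 ha with rfl | ha
      · rcases Finset.mem_insert.1 ha' with h | h
        · exact huw h.symm
        · exact (Finset.mem_erase.1 h).1 rfl
      · rcases Finset.mem_insert.1 ha' with rfl | h
        · exact (Finset.mem_erase.1 ha).1 rfl
        · exact Finset.disjoint_left.1 hdisjQQ'
            (Finset.erase_subset _ _ ha) (Finset.erase_subset _ _ h)
    have hdisjrest : ∀ R ∈ rest, Disjoint Qn R ∧ Disjoint Q'n R := by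
      intro R hR
      obtain ⟨hRP, hRQ, hRQ'⟩ := hrest R hR
      have hdQ : Disjoint Q R := hdisjP _ hQP _ hRP (Ne.symm hRQ)
      have hdQ' : Disjoint Q' R := hdisjP _ hQ'P _ hRP (Ne.symm hRQ')
      have hd : Disjoint (Q ∪ Q') R := Finset.disjoint_union_left.2 ⟨hdQ, hdQ'⟩
      exact ⟨(hd.mono_left hQnsub), (hd.mono_left hQ'nsub)⟩
    have hQnne : Qn.Nonempty := ⟨w, Finset.mem_insert_self _ _⟩
    have hQ'nne : Q'n.Nonempty := ⟨u, Finset.mem_insert_self _ _⟩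
    have hQnnotmem : Qn ∉ insert Q'n rest := by
      intro h
      rcases Finset.mem_insert.1 h with h | h
      · obtain ⟨a, ha⟩ := hQnne
        exact Finset.disjoint_left.1 hdisjQnQ'n ha (h ▸ ha)
      · obtain ⟨a, ha⟩ := hQnne
        exact Finset.disjoint_left.1 (hdisjrest _ h).1 ha ha
    have hQ'nnotmem : Q'n ∉ rest := by
      intro h
      obtain ⟨a, ha⟩ := hQ'nne
      exact Finset.disjoint_left.1 (hdisjrest _ h).2 ha ha
    -- Pn is a partition
    have hPnPart : PackPart k L Pn := by
      refine ⟨?_, ?_, ?_, ?_⟩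
      · intro R hR
        rcases Finset.mem_insert.1 hR with rfl | hR
        · exact hQncard
        · rcases Finset.mem_insert.1 hR with rfl | hR
          · exact hQ'ncard
          · exact hcardQ _ (hrest _ hR).1
      · intro R hR
        rcases Finset.mem_insert.1 hR with rfl | hR
        · exact hQnsub.trans (Finset.union_subset (hsubQ _ hQP) (hsubQ _ hQ'P))
        · rcases Finset.mem_insert.1 hR with rfl | hR
          · exact hQ'nsub.trans (Finset.union_subset (hsubQ _ hQP) (hsubQ _ hQ'P))
          · exact hsubQ _ (hrest _ hR).1
      · intro R hR R' hR' hneRR'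
        rcases Finset.mem_insert.1 hR with rfl | hR
        · rcases Finset.mem_insert.1 hR' with rfl | hR'
          · exact absurd rfl hneRR'
          · rcases Finset.mem_insert.1 hR' with rfl | hR'
            · exact hdisjQnQ'n
            · exact (hdisjrest _ hR').1
        · rcases Finset.mem_insert.1 hR with rfl | hR
          · rcases Finset.mem_insert.1 hR' with rfl | hR'
            · exact hdisjQnQ'n.symm
            · rcases Finset.mem_insert.1 hR' with rfl | hR'
              · exact absurd rfl hneRR'
              · exact (hdisjrest _ hR').2
          · rcases Finset.mem_insert.1 hR' with rfl | hR'
            · exact (hdisjrest _ hR).1.symm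
            · rcases Finset.mem_insert.1 hR' with rfl | hR'
              · exact (hdisjrest _ hR).2.symm
              · exact hdisjP _ (hrest _ hR).1 _ (hrest _ hR').1 hneRR'
      · intro a ha
        obtain ⟨R, hRP, haR⟩ := hcover a ha
        by_cases hRQ : R = Q
        · subst hRQ
          by_cases hau : a = u
          · exact ⟨Q'n, Finset.mem_insert_of_mem (Finset.mem_insert_self _ _),
              hau ▸ Finset.mem_insert_self _ _⟩
          · exact ⟨Qn, Finset.mem_insert_self _ _,
              Finset.mem_insert_of_mem (Finset.mem_erase.2 ⟨hau, haR⟩)⟩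
        · by_cases hRQ' : R = Q'
          · subst hRQ'
            by_cases haw : a = w
            · exact ⟨Qn, Finset.mem_insert_self _ _, haw ▸ Finset.mem_insert_self _ _⟩
            · exact ⟨Q'n, Finset.mem_insert_of_mem (Finset.mem_insert_self _ _),
                Finset.mem_insert_of_mem (Finset.mem_erase.2 ⟨haw, haR⟩)⟩
          · exact ⟨R, Finset.mem_insert_of_mem (Finset.mem_insert_of_mem
              (Finset.mem_erase.2 ⟨hRQ', Finset.mem_erase.2 ⟨hRQ, hRP⟩⟩)), haR⟩
    -- cost decreases
    have hcost : partCost G Pn < partCost G P := by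
      have hPeq : P = insert Q (insert Q' rest) := by
        rw [hrestDef]
        rw [Finset.insert_erase (Finset.mem_erase.2 ⟨hQ'neQ, hQ'P⟩), Finset.insert_erase hQP]
      have hQnotmem : Q ∉ insert Q' rest := by
        intro h
        rcases Finset.mem_insert.1 h with h | h
        · exact hQ'neQ h.symm
        · exact (hrest _ h).2.1 rfl
      have hQ'notmem : Q' ∉ rest := fun h => (hrest _ h).2.2 rfl
      have hsplit : partCost G P = pairCost G Q + (pairCost G Q' + ∑ R ∈ rest, pairCost G R) := by
        rw [hPeq]
        unfold partCost
        rw [Finset.sum_insert hQnotmem, Finset.sum_insert hQ'notmem]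
      have hsplitn : partCost G Pn =
          pairCost G Qn + (pairCost G Q'n + ∑ R ∈ rest, pairCost G R) := by
        unfold partCost
        rw [hPnDef, Finset.sum_insert hQnnotmem, Finset.sum_insert hQ'nnotmem]
      have hQn1 : pairCost G Qn = pairCost G (Q.erase u) := by
        apply pairCost_insert
        intro y hy
        have hyQ : y ∈ Q := Finset.erase_subset _ _ hy
        exact ⟨fun h => hclean w hwQ' y hyQ (hsym _ _ h), hclean w hwQ' y hyQ⟩
      have hQn2 : pairCost G (Q.erase u) < pairCost G Q := pairCost_erase_lt G hu hv hne hG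
      have hQ'n1 : pairCost G Q'n = pairCost G (Q'.erase w) := by
        apply pairCost_insert
        intro y hy
        have hyQ' : y ∈ Q' := Finset.erase_subset _ _ hy
        exact ⟨hclean y hyQ' u hu, fun h => hclean y hyQ' u hu (hsym _ _ h)⟩
      have hQ'n2 : pairCost G (Q'.erase w) ≤ pairCost G Q' :=
        pairCost_mono G (Finset.erase_subset _ _)
      omega
    exact ih Pn (by omega) hPnPart

end Combinatorial

section EdgeCount

lemma card_edges_through {n r : ℕ} (v : Fin n) :
    ((univ : Finset (Finset (Fin n))).filter (fun e => v ∈ e ∧ e.card = r)).card ≤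
      (n - 1).choose (r - 1) := by
  classical
  have h := Finset.card_le_card_of_injOn
    (s := (univ : Finset (Finset (Fin n))).filter (fun e => v ∈ e ∧ e.card = r))
    (t := Finset.powersetCard (r - 1) ((univ : Finset (Fin n)).erase v))
    (fun e : Finset (Fin n) => e.erase v) ?_ ?_
  · refine h.trans ?_
    rw [Finset.card_powersetCard, Finset.card_erase_of_mem (Finset.mem_univ v),
      Finset.card_univ, Fintype.card_fin]
  · intro e he
    rw [Finset.mem_coe, Finset.mem_filter] at he
    beta_reduce
    rw [Finset.mem_coe, Finset.mem_powersetCard]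
    exact ⟨Finset.erase_subset_erase v (Finset.subset_univ e),
      by rw [Finset.card_erase_of_mem he.2.1, he.2.2]⟩
  · intro e1 h1 e2 h2 heq
    simp only [Finset.coe_filter, Set.mem_setOf_eq] at h1 h2
    rw [← Finset.insert_erase h1.2.1, ← Finset.insert_erase h2.2.1]
    simp only at heq
    rw [heq]

end EdgeCount

set_option maxHeartbeats 1000000 in
/-- If `L` is an `(n, r, k, β, δ)`-packing of `K_n^r` with `β ≤ 1/2 - δ`, then for all
sufficiently large `n`, `L` can be partitioned into `|L|/k` parts of size `k` such that
any two `r`-graphs in the same part are vertex-disjoint. -/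
theorem packing_partition (β δ : ℝ) (hδ : 0 < δ) (hδβ : δ < β) (hβ : β < 1)
    (hβδ : β ≤ 1 / 2 - δ) (k r : ℕ) (hk : 1 ≤ k) (hr : 3 ≤ r) :
    ∃ N : ℕ, ∀ n : ℕ, N ≤ n → ∀ L : Finset (Subgraph n), IsPacking n r k β δ L →
      ∃ P : Finset (Finset (Subgraph n)),
        P.card = L.card / k ∧
        (∀ Q ∈ P, Q.card = k) ∧
        (∀ Q ∈ P, ∀ B ∈ Q, B ∈ L) ∧
        (∀ Q ∈ P, ∀ Q' ∈ P, Q ≠ Q' → Disjoint Q Q') ∧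
        (∀ B ∈ L, ∃ Q ∈ P, B ∈ Q) ∧
        (∀ Q ∈ P, ∀ B ∈ Q, ∀ B' ∈ Q, B ≠ B' → Disjoint B.1 B'.1) := by
  classical
  have hβ0 : (0:ℝ) < β := hδ.trans hδβ
  obtain ⟨rr, hrrdef⟩ : ∃ x : ℕ, x = r - 1 := ⟨_, rfl⟩
  obtain ⟨c2, hc2def⟩ : ∃ x : ℝ, x = 2 ^ rr * (rr.factorial : ℝ) := ⟨_, rfl⟩
  have hc2pos : 0 < c2 := by rw [hc2def]; positivity
  obtain ⟨K, hKdef⟩ : ∃ x : ℝ, x = (k:ℝ)^2 * (2 * c2) + (k:ℝ)^2 + k := ⟨_, rfl⟩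
  have t1 : Filter.Tendsto (fun n : ℕ => (n:ℝ) ^ β) Filter.atTop Filter.atTop :=
    (tendsto_rpow_atTop hβ0).comp tendsto_natCast_atTop_atTop
  have t2 : Filter.Tendsto (fun n : ℕ => (n:ℝ) ^ (1 - 2*β - δ)) Filter.atTop Filter.atTop :=
    (tendsto_rpow_atTop (by linarith)).comp tendsto_natCast_atTop_atTop
  have hev := ((t1.eventually_ge_atTop (2*(r:ℝ)+2)).and
      (t2.eventually_gt_atTop K)).and (Filter.eventually_ge_atTop 1)
  obtain ⟨N, hN⟩ := Filter.eventually_atTop.1 hev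
  refine ⟨N, fun n hn L hL => ?_⟩
  obtain ⟨⟨hA2, hA3⟩, hA1⟩ := hN n hn
  obtain ⟨hvert, hedis, hdegL, hhalf, ⟨hLlower, hdvd⟩, hsame⟩ := hL
  set q : ℕ := ⌈(n:ℝ)^β⌉₊ with hqdef
  have hn1 : (1:ℝ) ≤ (n:ℝ) := by exact_mod_cast hA1
  have hn0 : (0:ℝ) < (n:ℝ) := by linarith
  have hnb1 : (1:ℝ) ≤ (n:ℝ)^β := Real.one_le_rpow hn1 hβ0.le
  have hq_ge : (n:ℝ)^β ≤ (q:ℝ) := Nat.le_ceil _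
  have hq_le : (q:ℝ) ≤ 2 * (n:ℝ)^β := by
    have h := Nat.ceil_lt_add_one (by linarith : (0:ℝ) ≤ (n:ℝ)^β)
    rw [← hqdef] at h
    linarith
  have hqr : 2*r+2 ≤ q := by
    have h : ((2*r+2 : ℕ) : ℝ) ≤ (q:ℝ) := by push_cast; linarith
    exact_mod_cast h
  have hrr1 : (rr:ℝ) = (r:ℝ) - 1 := by
    rw [hrrdef]
    push_cast [Nat.cast_sub (by omega : 1 ≤ r)]
    ring
  have hchpos_nat : 0 < (q-1).choose rr := Nat.choose_pos (by omega)
  obtain ⟨ch, hchdef⟩ : ∃ x : ℝ, x = ((q-1).choose rr : ℝ) := ⟨_, rfl⟩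
  have hchpos : (0:ℝ) < ch := by rw [hchdef]; exact_mod_cast hchpos_nat
  obtain ⟨A, hAdef⟩ : ∃ x : ℝ, x = ((n-1).choose rr : ℝ) := ⟨_, rfl⟩
  have hA0 : (0:ℝ) ≤ A := by rw [hAdef]; positivity
  obtain ⟨Mr, hMrdef⟩ : ∃ x : ℝ, x = A * (n:ℝ)^δ / ch := ⟨_, rfl⟩
  have hMr0 : 0 ≤ Mr := by rw [hMrdef]; positivity
  -- per-vertex bound
  have hM : ∀ v : Fin n, ((L.filter (fun B' => v ∈ B'.1)).card : ℝ) ≤ Mr := by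
    intro v
    set T := L.filter (fun B' => v ∈ B'.1) with hTdef
    have hlow : ∀ B' ∈ T, (n:ℝ)^(-δ) * ch ≤ ((B'.2.filter (fun e => v ∈ e)).card : ℝ) := by
      intro B' hB'
      rw [hTdef, Finset.mem_filter] at hB'
      have hX := hdegL B' hB'.1 {v} (Finset.singleton_subset_iff.2 hB'.2)
        (by simp) (by simp; omega)
      simpa [hqdef, hchdef, hrrdef] using hX
    have hstep1 : (T.card : ℝ) * ((n:ℝ)^(-δ) * ch) ≤
        ∑ B' ∈ T, ((B'.2.filter (fun e => v ∈ e)).card : ℝ) := by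
      have h := Finset.card_nsmul_le_sum T
        (fun B' => ((B'.2.filter (fun e => v ∈ e)).card : ℝ)) _ hlow
      simpa [nsmul_eq_mul] using h
    have hstep2 : ∑ B' ∈ T, (B'.2.filter (fun e => v ∈ e)).card =
        (T.biUnion (fun B' => B'.2.filter (fun e => v ∈ e))).card := by
      refine (Finset.card_biUnion ?_).symm
      intro B1 h1 B2 h2 hne
      exact Finset.disjoint_filter_filter
        (hedis _ (Finset.mem_filter.1 h1).1 _ (Finset.mem_filter.1 h2).1 hne)
    have hstep3 : T.biUnion (fun B' => B'.2.filter (fun e => v ∈ e)) ⊆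
        (univ : Finset (Finset (Fin n))).filter (fun e => v ∈ e ∧ e.card = r) := by
      intro e he
      rw [Finset.mem_biUnion] at he
      obtain ⟨B', hB', he⟩ := he
      rw [Finset.mem_filter] at he ⊢
      exact ⟨Finset.mem_univ _, he.2, ((hvert _ (Finset.mem_filter.1 hB').1).2 e he.1).2⟩
    have hstep4 : ∑ B' ∈ T, ((B'.2.filter (fun e => v ∈ e)).card : ℝ) ≤ A := by
      rw [← Nat.cast_sum, hAdef, hrrdef]
      exact_mod_cast hstep2.le.trans
        ((Finset.card_le_card hstep3).trans (card_edges_through v))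
    have hTA : (T.card : ℝ) * ((n:ℝ)^(-δ) * ch) ≤ A := hstep1.trans hstep4
    have hcpos : 0 < (n:ℝ)^(-δ) * ch := mul_pos (Real.rpow_pos_of_pos hn0 _) hchpos
    have h1 := (le_div_iff₀ hcpos).2 hTA
    have h2 : A / ((n:ℝ)^(-δ) * ch) = Mr := by
      rw [hMrdef, Real.rpow_neg hn0.le]
      have hnd : ((n:ℝ)^δ) ≠ 0 := ne_of_gt (Real.rpow_pos_of_pos hn0 _)
      field_simp
    rw [h2] at h1
    exact h1
  -- conflict-degree bound
  obtain ⟨Dn, hDndef⟩ : ∃ x : ℕ, x = ⌈(q:ℝ) * Mr⌉₊ := ⟨_, rfl⟩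
  have hDnR : (Dn:ℝ) < (q:ℝ)*Mr + 1 := by
    rw [hDndef]; exact Nat.ceil_lt_add_one (mul_nonneg (Nat.cast_nonneg q) hMr0)
  have hconf : ∀ B ∈ L,
      (L.filter (fun B' => B' ≠ B ∧ ¬ Disjoint B.1 B'.1)).card ≤ Dn := by
    intro B hB
    have hsub : L.filter (fun B' => B' ≠ B ∧ ¬ Disjoint B.1 B'.1) ⊆
        B.1.biUnion (fun v => L.filter (fun B' => v ∈ B'.1)) := by
      intro B' hB'
      rw [Finset.mem_filter] at hB'
      obtain ⟨hB'L, _, hnd⟩ := hB'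
      obtain ⟨v, hv1, hv2⟩ := Finset.not_disjoint_iff.1 hnd
      exact Finset.mem_biUnion.2 ⟨v, hv1, Finset.mem_filter.2 ⟨hB'L, hv2⟩⟩
    have h1 : (L.filter (fun B' => B' ≠ B ∧ ¬ Disjoint B.1 B'.1)).card ≤
        ∑ v ∈ B.1, (L.filter (fun B' => v ∈ B'.1)).card :=
      (Finset.card_le_card hsub).trans Finset.card_biUnion_le
    have h2 : ((∑ v ∈ B.1, (L.filter (fun B' => v ∈ B'.1)).card : ℕ) : ℝ) ≤ (q:ℝ) * Mr := by
      rw [Nat.cast_sum]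
      calc ∑ v ∈ B.1, ((L.filter (fun B' => v ∈ B'.1)).card : ℝ)
          ≤ ∑ _v ∈ B.1, Mr := Finset.sum_le_sum (fun v _ => hM v)
        _ = (B.1.card : ℝ) * Mr := by rw [Finset.sum_const, nsmul_eq_mul]
        _ = (q:ℝ) * Mr := by rw [(hvert B hB).1, hqdef]
    have h3 : ((L.filter (fun B' => B' ≠ B ∧ ¬ Disjoint B.1 B'.1)).card : ℝ) ≤ (Dn:ℝ) :=
      le_trans (le_trans (by exact_mod_cast h1) h2) (by rw [hDndef]; exact Nat.le_ceil _)
    exact_mod_cast h3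
  -- arithmetic: k * (k * Dn + 1) < L.card
  obtain ⟨E, hEdef⟩ : ∃ x : ℝ, x = β + (rr:ℝ) + δ - β*(rr:ℝ) := ⟨_, rfl⟩
  have hE0 : 0 ≤ E := by
    have h1 : (0:ℝ) ≤ (rr:ℝ)*(1-β) := mul_nonneg (Nat.cast_nonneg _) (by linarith)
    have h2 : (rr:ℝ)*(1-β) = (rr:ℝ) - β*(rr:ℝ) := by ring
    rw [hEdef]; linarith [h2 ▸ h1]
  have hnE1 : (1:ℝ) ≤ (n:ℝ)^E := Real.one_le_rpow hn1 hE0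
  have hnEpos : (0:ℝ) < (n:ℝ)^E := Real.rpow_pos_of_pos hn0 _
  have hAub : A ≤ (n:ℝ)^((rr:ℕ):ℝ) := by
    have h1 : (n-1).choose rr ≤ n^rr :=
      (Nat.choose_le_pow _ _).trans (Nat.pow_le_pow_left (Nat.sub_le n 1) rr)
    rw [hAdef, Real.rpow_natCast]
    exact_mod_cast h1
  have hchlb : (n:ℝ)^(β*(rr:ℝ)) / c2 ≤ ch := by
    have hple := Nat.pow_le_choose (α := ℝ) rr (q-1)
    have hidx : q - 1 + 1 - rr = q - rr := by omega
    rw [hidx] at hple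
    have hhalfq : (n:ℝ)^β/2 ≤ ((q-rr:ℕ):ℝ) := by
      have h2q : q ≤ 2*(q-rr) := by omega
      have h2q' : (q:ℝ) ≤ 2*((q-rr:ℕ):ℝ) := by exact_mod_cast h2q
      linarith
    have hpow : ((n:ℝ)^β/2)^rr ≤ ((q-rr:ℕ):ℝ)^rr :=
      pow_le_pow_left₀ (by positivity) hhalfq rr
    have hcast : (((q-rr)^rr : ℕ) : ℝ) = ((q-rr:ℕ):ℝ)^rr := by push_cast; ring
    have hrw : ((n:ℝ)^β/2)^rr = (n:ℝ)^(β*(rr:ℝ)) / 2^rr := by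
      rw [div_pow, Real.rpow_mul hn0.le, Real.rpow_natCast]
    calc (n:ℝ)^(β*(rr:ℝ)) / c2 = ((n:ℝ)^(β*(rr:ℝ)) / 2^rr) / (rr.factorial : ℝ) := by
          rw [hc2def, div_div]
      _ ≤ (((q-rr:ℕ):ℝ)^rr) / (rr.factorial : ℝ) := by
          gcongr
          rw [← hrw]
          exact hpow
      _ ≤ ch := by
          rw [hchdef, ← hcast]
          exact_mod_cast hple
  have hqMr_ub : (q:ℝ) * Mr ≤ 2*c2*(n:ℝ)^E := by
    have hnum : (q:ℝ) * (A * (n:ℝ)^δ) ≤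
        (2*(n:ℝ)^β) * ((n:ℝ)^((rr:ℕ):ℝ) * (n:ℝ)^δ) := by
      apply mul_le_mul hq_le ?_ (by positivity) (by positivity)
      exact mul_le_mul_of_nonneg_right hAub (by positivity)
    have hDbpos : (0:ℝ) < (n:ℝ)^(β*(rr:ℝ)) / c2 := by positivity
    have hdiv : (q:ℝ) * Mr = ((q:ℝ) * (A * (n:ℝ)^δ)) / ch := by
      rw [hMrdef]; ring
    rw [hdiv]
    calc ((q:ℝ) * (A * (n:ℝ)^δ)) / ch
        ≤ ((2*(n:ℝ)^β) * ((n:ℝ)^((rr:ℕ):ℝ) * (n:ℝ)^δ)) / ((n:ℝ)^(β*(rr:ℝ)) / c2) :=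
          div_le_div₀ (by positivity) hnum hDbpos hchlb
      _ = 2*c2*(n:ℝ)^E := by
          have hsplit : (n:ℝ)^E =
              (n:ℝ)^β * (n:ℝ)^((rr:ℕ):ℝ) * (n:ℝ)^δ / (n:ℝ)^(β*(rr:ℝ)) := by
            rw [hEdef, ← Real.rpow_add hn0, ← Real.rpow_add hn0, ← Real.rpow_sub hn0]
          rw [div_div_eq_mul_div, hsplit]
          have hne1 : ((n:ℝ)^(β*(rr:ℝ))) ≠ 0 := ne_of_gt (by positivity)
          field_simp
  have hfin : k * (k * Dn + 1) < L.card := by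
    have hKE : K * (n:ℝ)^E < (n:ℝ)^((r:ℝ) - r*β) := by
      have hmul := mul_lt_mul_of_pos_right hA3 hnEpos
      have hEadd : (n:ℝ)^(1-2*β-δ) * (n:ℝ)^E = (n:ℝ)^((r:ℝ) - r*β) := by
        rw [← Real.rpow_add hn0, hEdef, hrr1]
        congr 1
        ring
      rw [hEadd] at hmul
      exact hmul
    have hk1 : (1:ℝ) ≤ (k:ℝ) := by exact_mod_cast hk
    have e1 : (k:ℝ)^2 * ((q:ℝ)*Mr) ≤ (k:ℝ)^2 * (2*c2*(n:ℝ)^E) :=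
      mul_le_mul_of_nonneg_left hqMr_ub (by positivity)
    have e2 : (k:ℝ)^2 ≤ (k:ℝ)^2 * (n:ℝ)^E := le_mul_of_one_le_right (by positivity) hnE1
    have e3 : (k:ℝ) ≤ (k:ℝ) * (n:ℝ)^E := le_mul_of_one_le_right (by positivity) hnE1
    have hfinR : ((k * (k * Dn + 1) : ℕ) : ℝ) < (L.card : ℝ) := by
      push_cast
      have c1 : (k:ℝ)*((k:ℝ)*(Dn:ℝ)+1) ≤ (k:ℝ)*((k:ℝ)*((q:ℝ)*Mr+1)+1) := by
        gcongr <;> first | positivity | exact hDnR.le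
      have c3 : (k:ℝ)*((k:ℝ)*((q:ℝ)*Mr+1)+1) ≤ K*(n:ℝ)^E := by
        rw [hKdef]
        nlinarith [e1, e2, e3]
      calc (k:ℝ)*((k:ℝ)*(Dn:ℝ)+1) ≤ K*(n:ℝ)^E := le_trans c1 c3
        _ < (n:ℝ)^((r:ℝ) - r*β) := hKE
        _ ≤ (L.card : ℝ) := hLlower
    exact_mod_cast hfinR
  have hsymG : ∀ a b : Subgraph n, ¬ Disjoint a.1 b.1 → ¬ Disjoint b.1 a.1 :=
    fun a b h hd => h hd.symm
  obtain ⟨P, hPart, hfree⟩ := exists_conflict_free_packPart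
    (fun B B' : Subgraph n => ¬ Disjoint B.1 B'.1) hsymG L k Dn hk hconf hfin hdvd
  obtain ⟨hp1, hp2, hp3, hp4⟩ := hPart
  refine ⟨P, ?_, hp1, fun Q hQ B hB => hp2 Q hQ hB, hp3, hp4, ?_⟩
  · have hLP : L.card = P.card * k := packPart_card ⟨hp1, hp2, hp3, hp4⟩
    rw [hLP, Nat.mul_div_cancel _ (by omega : 0 < k)]
  · intro Q hQ B hB B' hB' hne
    exact not_not.1 (hfree Q hQ B hB B' hB' hne)
end
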